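/- arXiv:2103.01017 — 3 statements merged into one kernel-verified Lean document; each statement's English description precedes it below -/
import Mathlib

section
/- Let D = (V, Λ) be a digraph and let P be a directed path from u to v with u ≠ v. If d⁻(u) < d⁻(v) − 1, then the orientation obtained by reversing every arc of P has indegree sequence strictly smaller in lexicographic order than that of Λ. -/
/-- The list of arcs (consecutive pairs) of a list of vertices. -/
def listArcs {V : Type*} (p : List V) : List (V × V) := p.zip p.tail

/-- `p` is a directed path from `u` to `v` in the digraph with arc set `A`. -/
def IsDipath {V : Type*} (A : Finset (V × V)) (u v : V) (p : List V) : Prop :=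
  p ≠ [] ∧ p.head? = some u ∧ p.getLast? = some v ∧ p.Nodup ∧
    p.Chain' (fun a b => (a, b) ∈ A)

/-- Two paths (given as vertex lists) are arc-disjoint. -/
def ArcDisjoint {V : Type*} (p q : List V) : Prop :=
  ∀ e ∈ listArcs p, e ∉ listArcs q

/-- `u` reaches `v`: there is a directed path from `u` to `v`. -/
def Reaches {V : Type*} (A : Finset (V × V)) (u v : V) : Prop :=
  ∃ p, IsDipath A u v p

/-- `u` two-reaches `v`: there are two arc-disjoint directed paths from `u` to `v`. -/
def TwoReaches {V : Type*} (A : Finset (V × V)) (u v : V) : Prop :=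
  ∃ p q, IsDipath A u v p ∧ IsDipath A u v q ∧ ArcDisjoint p q

/-- A digraph is strongly connected if every vertex reaches every other vertex. -/
def StronglyConnected {V : Type*} (A : Finset (V × V)) : Prop :=
  ∀ u v : V, Reaches A u v

/-- The digraph obtained by reversing every arc of the path `p`. -/
def reverseAlong {V : Type*} [DecidableEq V] (A : Finset (V × V)) (p : List V) :
    Finset (V × V) :=
  (A \ (listArcs p).toFinset) ∪ ((listArcs p).map Prod.swap).toFinset

/-- The indegree of a vertex in the digraph with arc set `A`. -/
def inDeg {V : Type*} [DecidableEq V] (A : Finset (V × V)) (v : V) : ℕ :=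
  (A.filter (fun e => e.2 = v)).card

/-- The indegree sequence: the indegrees of all vertices in non-increasing order. -/
def degSeq (V : Type*) [Fintype V] [DecidableEq V] (A : Finset (V × V)) : List ℕ :=
  ((Finset.univ.val.map (inDeg A)).sort (· ≤ ·)).reverse

/-- `A` is an orientation of the simple graph `G`: every edge of `G` gets exactly one
direction, and every arc of `A` comes from an edge of `G`. -/
def IsOrientation {V : Type*} (G : SimpleGraph V) (A : Finset (V × V)) : Prop :=
  (∀ a b : V, G.Adj a b ↔ ((a, b) ∈ A ∨ (b, a) ∈ A)) ∧
    ∀ a b : V, ¬((a, b) ∈ A ∧ (b, a) ∈ A)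

/-- The underlying undirected simple graph of a digraph. -/
def underlying {V : Type*} (A : Finset (V × V)) : SimpleGraph V :=
  SimpleGraph.fromRel (fun a b => (a, b) ∈ A)

/-- `p` is a directed path from `u` to `v` all of whose vertices lie in `S`. -/
def IsDipathIn {V : Type*} (A : Finset (V × V)) (S : Set V) (u v : V) (p : List V) : Prop :=
  IsDipath A u v p ∧ ∀ x ∈ p, x ∈ S

/-- `u` reaches `v` within the induced subdigraph on `S`. -/
def ReachesWithin {V : Type*} (A : Finset (V × V)) (S : Set V) (u v : V) : Prop :=
  ∃ p, IsDipathIn A S u v p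



section arcs
variable {V : Type*}

lemma listArcs_cons_cons (a b : V) (t : List V) :
    listArcs (a :: b :: t) = (a, b) :: listArcs (b :: t) := rfl

lemma listArcs_singleton (a : V) : listArcs [a] = [] := rfl

lemma listArcs_nil : listArcs ([] : List V) = [] := rfl

lemma arcs_fst_mem : ∀ {p : List V} {e : V × V}, e ∈ listArcs p → e.1 ∈ p := by
  intro p
  induction p with
  | nil => intro e h; simp [listArcs_nil] at h
  | cons a rest ih =>
    cases rest with
    | nil => intro e h; simp [listArcs_singleton] at h
    | cons b t =>
      intro e h
      rw [listArcs_cons_cons] at h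
      rcases List.mem_cons.mp h with h | h
      · subst h; simp
      · exact List.mem_cons_of_mem _ (ih h)

lemma arcs_snd_mem_tail : ∀ {p : List V} {e : V × V}, e ∈ listArcs p → e.2 ∈ p.tail := by
  intro p
  induction p with
  | nil => intro e h; simp [listArcs_nil] at h
  | cons a rest ih =>
    cases rest with
    | nil => intro e h; simp [listArcs_singleton] at h
    | cons b t =>
      intro e h
      rw [listArcs_cons_cons] at h
      rcases List.mem_cons.mp h with h | h
      · subst h; simp
      · exact List.mem_cons_of_mem _ (ih h)

lemma arcs_chain : ∀ {p : List V} {R : V → V → Prop}, p.Chain' R →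
    ∀ {e : V × V}, e ∈ listArcs p → R e.1 e.2 := by
  intro p
  induction p with
  | nil => intro R _ e h; simp [listArcs_nil] at h
  | cons a rest ih =>
    cases rest with
    | nil => intro R _ e h; simp [listArcs_singleton] at h
    | cons b t =>
      intro R hc e h
      rw [listArcs_cons_cons] at h
      rcases List.isChain_cons_cons.mp hc with ⟨hab, hc'⟩
      rcases List.mem_cons.mp h with h | h
      · subst h; exact hab
      · exact ih hc' h

lemma arcs_succ_unique : ∀ {p : List V}, p.Nodup → ∀ {a b c : V},
    (a, b) ∈ listArcs p → (a, c) ∈ listArcs p → b = c := by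
  intro p
  induction p with
  | nil => intro _ a b c h; simp [listArcs_nil] at h
  | cons x rest ih =>
    cases rest with
    | nil => intro _ a b c h; simp [listArcs_singleton] at h
    | cons y t =>
      intro hnd a b c hb hc
      have hx : x ∉ y :: t := (List.nodup_cons.mp hnd).1
      rw [listArcs_cons_cons] at hb hc
      rcases List.mem_cons.mp hb with hb | hb <;> rcases List.mem_cons.mp hc with hc | hc <;> [skip; skip; skip; skip]
      · rw [Prod.mk.injEq] at hb hc; rw [hb.2, hc.2]
      · rw [Prod.mk.injEq] at hb
        exact absurd (hb.1 ▸ arcs_fst_mem hc : x ∈ y :: t) hx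
      · rw [Prod.mk.injEq] at hc
        exact absurd (hc.1 ▸ arcs_fst_mem hb : x ∈ y :: t) hx
      · exact ih (List.nodup_cons.mp hnd).2 hb hc

end arcs

section arcs2
variable {V : Type*}

lemma arcs_not_last : ∀ {p : List V}, p.Nodup → ∀ {a b : V},
    (a, b) ∈ listArcs p → ∀ h : p ≠ [], a ≠ p.getLast h := by
  intro p
  induction p with
  | nil => intro _ a b h; simp [listArcs_nil] at h
  | cons x rest ih =>
    cases rest with
    | nil => intro _ a b h; simp [listArcs_singleton] at h
    | cons y t =>
      intro hnd a b hab h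
      have hx : x ∉ y :: t := (List.nodup_cons.mp hnd).1
      rw [List.getLast_cons (by simp : (y :: t) ≠ [])]
      rw [listArcs_cons_cons] at hab
      rcases List.mem_cons.mp hab with hab | hab
      · rw [Prod.mk.injEq] at hab
        intro he
        apply hx
        rw [← hab.1, he]
        exact List.getLast_mem (by simp : (y :: t) ≠ [])
      · exact ih (List.nodup_cons.mp hnd).2 hab (by simp)

lemma arcs_to_last : ∀ {p : List V} (h : p ≠ []), p.head h ≠ p.getLast h →
    ∃ a, (a, p.getLast h) ∈ listArcs p := by
  intro p
  induction p with
  | nil => intro h; simp at h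
  | cons x rest ih =>
    cases rest with
    | nil =>
      intro h hne
      simp at hne
    | cons y t =>
      intro h hne
      rw [List.getLast_cons (by simp : (y :: t) ≠ [])]
      by_cases hy : (y :: t).getLast (by simp) = (y :: t).head (by simp)
      · refine ⟨x, ?_⟩
        rw [listArcs_cons_cons, hy]
        simp
      · obtain ⟨a, ha⟩ := ih (by simp) (Ne.symm hy)
        exact ⟨a, by rw [listArcs_cons_cons]; exact List.mem_cons_of_mem _ ha⟩

lemma arcs_has_pred : ∀ {p : List V} {w b : V}, (w, b) ∈ listArcs p →
    ∀ h : p ≠ [], w ≠ p.head h → ∃ a, (a, w) ∈ listArcs p := by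
  intro p
  induction p with
  | nil => intro w b h; simp [listArcs_nil] at h
  | cons x rest ih =>
    cases rest with
    | nil => intro w b h; simp [listArcs_singleton] at h
    | cons y t =>
      intro w b hwb h hw
      simp only [List.head_cons] at hw
      rw [listArcs_cons_cons] at hwb
      rcases List.mem_cons.mp hwb with hwb | hwb
      · rw [Prod.mk.injEq] at hwb; exact absurd hwb.1 hw
      · by_cases hwy : w = y
        · exact ⟨x, by rw [listArcs_cons_cons, hwy]; simp⟩
        · obtain ⟨a, ha⟩ := ih hwb (by simp) (by simpa using hwy)
          exact ⟨a, by rw [listArcs_cons_cons]; exact List.mem_cons_of_mem _ ha⟩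

end arcs2

lemma lex_aux : ∀ (l l' : List ℕ), l.Pairwise (fun a b => b ≤ a) →
    l'.Pairwise (fun a b => b ≤ a) → l'.length = l.length → ∀ T : ℕ,
    l'.countP (fun x => T ≤ x) < l.countP (fun x => T ≤ x) →
    (∀ t : ℕ, T < t → l'.countP (fun x => t ≤ x) ≤ l.countP (fun x => t ≤ x)) →
    List.Lex (· < ·) l' l := by
  intro l
  induction l with
  | nil => intro l' _ _ _ T h1 _; simp at h1
  | cons a t ih =>
    intro l' hs hs' hlen T h1 h2
    cases l' with
    | nil => exact List.Lex.nil
    | cons a' t' =>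
      have hTa : T ≤ a := by
        have hpos : 0 < (a :: t).countP (fun x => T ≤ x) := Nat.pos_of_ne_zero (by omega)
        obtain ⟨x, hx, hTx⟩ := List.countP_pos_iff.mp hpos
        have := fun x (h : x ∈ t) => List.rel_of_pairwise_cons hs h
        rcases List.mem_cons.mp hx with h | h
        · exact of_decide_eq_true (h ▸ hTx)
        · exact le_trans (of_decide_eq_true hTx) (this x h)
      have haa : a' ≤ a := by
        by_contra hlt
        push_neg at hlt
        have hcontra := h2 a' (lt_of_le_of_lt hTa hlt)
        have hz : (a :: t).countP (fun x => a' ≤ x) = 0 := by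
          rw [List.countP_eq_zero]
          intro x hx
          simp only [decide_eq_true_eq]
          rcases List.mem_cons.mp hx with h | h
          · omega
          · have := List.rel_of_pairwise_cons hs h; omega
        have hpos : 0 < (a' :: t').countP (fun x => a' ≤ x) := by
          apply List.countP_pos_iff.mpr
          exact ⟨a', List.mem_cons_self, by simp⟩
        omega
      rcases lt_or_eq_of_le haa with hlt | heq
      · exact List.Lex.rel hlt
      · subst heq
        apply List.Lex.cons
        apply ih t' hs.of_cons hs'.of_cons (by simpa using hlen) T
        · have e1 := List.countP_cons (p := fun x => T ≤ x) (a := a') (l := t)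
          have e2 := List.countP_cons (p := fun x => T ≤ x) (a := a') (l := t')
          rw [e1, e2] at h1
          simpa using h1
        · intro s hTs
          have := h2 s hTs
          rw [List.countP_cons, List.countP_cons] at this
          omega



section deg
variable {V : Type*} [Fintype V] [DecidableEq V]

lemma degSeq_sorted (A : Finset (V × V)) : (degSeq V A).Pairwise (fun a b => b ≤ a) := by
  rw [degSeq, List.pairwise_reverse]
  exact Multiset.pairwise_sort ..

lemma degSeq_length (A : Finset (V × V)) : (degSeq V A).length = Fintype.card V := by
  rw [degSeq, List.length_reverse, Multiset.length_sort, Multiset.card_map]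
  rfl

lemma degSeq_countP (A : Finset (V × V)) (T : ℕ) :
    (degSeq V A).countP (fun x => T ≤ x) =
      (Finset.univ.filter (fun w => T ≤ inDeg A w)).card := by
  rw [degSeq, List.countP_reverse]
  have : (Multiset.sort (Finset.univ.val.map (inDeg A)) (· ≤ ·)).countP (fun x => T ≤ x)
      = Multiset.countP (fun x => T ≤ x) (Finset.univ.val.map (inDeg A)) := by
    rw [← Multiset.coe_countP, Multiset.sort_eq]
  rw [this, Multiset.countP_map]
  simp [Finset.card_filter, Finset.filter]

end deg


section main
variable {V : Type*} [DecidableEq V]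

lemma filter_reverseAlong (A : Finset (V × V)) (p : List V) (w : V) :
    (reverseAlong A p).filter (fun e => e.2 = w) =
      ((A.filter (fun e => e.2 = w)) \ ((listArcs p).toFinset.filter (fun e => e.2 = w))) ∪
        (((listArcs p).map Prod.swap).toFinset.filter (fun e => e.2 = w)) := by
  ext e
  simp only [Finset.mem_filter, Finset.mem_union, Finset.mem_sdiff, reverseAlong]
  tauto

lemma mem_swap_filter {p : List V} {w : V} {e : V × V} :
    e ∈ (((listArcs p).map Prod.swap).toFinset.filter (fun e => e.2 = w)) ↔
      (e.2, e.1) ∈ listArcs p ∧ e.2 = w := by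
  simp only [Finset.mem_filter, List.mem_toFinset, List.mem_map]
  constructor
  · rintro ⟨⟨d, hd, rfl⟩, h2⟩
    exact ⟨hd, h2⟩
  · rintro ⟨h1, h2⟩
    exact ⟨⟨(e.2, e.1), h1, rfl⟩, h2⟩

lemma mem_arcs_filter {p : List V} {w : V} {e : V × V} :
    e ∈ ((listArcs p).toFinset.filter (fun e => e.2 = w)) ↔
      e ∈ listArcs p ∧ e.2 = w := by
  simp

lemma deg_v (A : Finset (V × V)) (p : List V) (hnd : p.Nodup)
    (hch : p.Chain' (fun a b => (a, b) ∈ A)) (h : p ≠ [])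
    (hne : p.head h ≠ p.getLast h) :
    inDeg (reverseAlong A p) (p.getLast h) < inDeg A (p.getLast h) := by
  set v := p.getLast h with hv
  rw [inDeg, inDeg, filter_reverseAlong]
  have hFR : (((listArcs p).map Prod.swap).toFinset.filter (fun e => e.2 = v)) = ∅ := by
    rw [Finset.eq_empty_iff_forall_notMem]
    intro e he
    obtain ⟨h1, h2⟩ := mem_swap_filter.mp he
    exact arcs_not_last hnd h1 h (by rw [h2])
  rw [hFR, Finset.union_empty]
  have hsub : ((listArcs p).toFinset.filter (fun e => e.2 = v)) ⊆
      (A.filter (fun e => e.2 = v)) := by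
    intro e he
    obtain ⟨h1, h2⟩ := mem_arcs_filter.mp he
    exact Finset.mem_filter.mpr ⟨arcs_chain hch h1, h2⟩
  obtain ⟨a, ha⟩ := arcs_to_last h hne
  have hmem : (a, v) ∈ (listArcs p).toFinset.filter (fun e => e.2 = v) :=
    mem_arcs_filter.mpr ⟨ha, rfl⟩
  have h1 : 0 < ((listArcs p).toFinset.filter (fun e => e.2 = v)).card :=
    Finset.card_pos.mpr ⟨_, hmem⟩
  have h2 := Finset.card_le_card hsub
  rw [Finset.card_sdiff_of_subset hsub]
  omega

lemma deg_u (A : Finset (V × V)) (p : List V) (hnd : p.Nodup) (h : p ≠ []) :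
    inDeg (reverseAlong A p) (p.head h) ≤ inDeg A (p.head h) + 1 := by
  set u := p.head h with hu
  rw [inDeg, inDeg, filter_reverseAlong]
  calc _ ≤ ((A.filter (fun e => e.2 = u)) \ ((listArcs p).toFinset.filter (fun e => e.2 = u))).card +
        (((listArcs p).map Prod.swap).toFinset.filter (fun e => e.2 = u)).card :=
        Finset.card_union_le _ _
    _ ≤ (A.filter (fun e => e.2 = u)).card + 1 := by
        refine Nat.add_le_add (Finset.card_le_card Finset.sdiff_subset) ?_
        apply Finset.card_le_one.mpr
        intro e he e' he'
        obtain ⟨h1, h2⟩ := mem_swap_filter.mp he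
        obtain ⟨h1', h2'⟩ := mem_swap_filter.mp he'
        have : e.1 = e'.1 := arcs_succ_unique hnd (h2 ▸ h1) (h2' ▸ h1')
        exact Prod.ext this (h2.trans h2'.symm)

lemma deg_other (A : Finset (V × V)) (p : List V) (hnd : p.Nodup)
    (hch : p.Chain' (fun a b => (a, b) ∈ A)) (h : p ≠ []) (w : V)
    (hwu : w ≠ p.head h) (hwv : w ≠ p.getLast h) :
    inDeg (reverseAlong A p) w ≤ inDeg A w := by
  rw [inDeg, inDeg, filter_reverseAlong]
  have hsub : ((listArcs p).toFinset.filter (fun e => e.2 = w)) ⊆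
      (A.filter (fun e => e.2 = w)) := by
    intro e he
    obtain ⟨h1, h2⟩ := mem_arcs_filter.mp he
    exact Finset.mem_filter.mpr ⟨arcs_chain hch h1, h2⟩
  have hR1 : (((listArcs p).map Prod.swap).toFinset.filter (fun e => e.2 = w)).card ≤ 1 := by
    apply Finset.card_le_one.mpr
    intro e he e' he'
    obtain ⟨h1, h2⟩ := mem_swap_filter.mp he
    obtain ⟨h1', h2'⟩ := mem_swap_filter.mp he'
    have : e.1 = e'.1 := arcs_succ_unique hnd (h2 ▸ h1) (h2' ▸ h1')
    exact Prod.ext this (h2.trans h2'.symm)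
  have himp : 0 < (((listArcs p).map Prod.swap).toFinset.filter (fun e => e.2 = w)).card →
      0 < ((listArcs p).toFinset.filter (fun e => e.2 = w)).card := by
    intro hpos
    obtain ⟨e, he⟩ := Finset.card_pos.mp hpos
    obtain ⟨h1, h2⟩ := mem_swap_filter.mp he
    obtain ⟨a, ha⟩ := arcs_has_pred (h2 ▸ h1) h hwu
    exact Finset.card_pos.mpr ⟨(a, w), mem_arcs_filter.mpr ⟨ha, rfl⟩⟩
  have hS := Finset.card_le_card hsub
  calc _ ≤ ((A.filter (fun e => e.2 = w)) \ ((listArcs p).toFinset.filter (fun e => e.2 = w))).card +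
        (((listArcs p).map Prod.swap).toFinset.filter (fun e => e.2 = w)).card :=
        Finset.card_union_le _ _
    _ ≤ (A.filter (fun e => e.2 = w)).card := by
        rw [Finset.card_sdiff_of_subset hsub]
        omega

end main

/-- Reversing a directed path from `u` to `v` with `d⁻(u) < d⁻(v) - 1` strictly decreases
the indegree sequence in lexicographic order. -/
theorem stmt_10 {V : Type*} [Fintype V] [DecidableEq V] (A : Finset (V × V))
    (u v : V) (huv : u ≠ v) (p : List V) (hp : IsDipath A u v p)
    (hdeg : inDeg A u + 1 < inDeg A v) :
    List.Lex (· < ·) (degSeq V (reverseAlong A p)) (degSeq V A) := by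
  obtain ⟨hne, hhead, hlast, hnd, hch⟩ := hp
  have hu : p.head hne = u := by
    rw [List.head?_eq_head hne] at hhead
    exact Option.some.inj hhead
  have hv : p.getLast hne = v := by
    rw [List.getLast?_eq_getLast hne] at hlast
    exact Option.some.inj hlast
  have hne' : p.head hne ≠ p.getLast hne := by rw [hu, hv]; exact huv
  have hgv : inDeg (reverseAlong A p) v < inDeg A v := by
    rw [← hv]; exact deg_v A p hnd hch hne hne'
  have hgu : inDeg (reverseAlong A p) u ≤ inDeg A u + 1 := by
    rw [← hu]; exact deg_u A p hnd hne
  have hoth : ∀ w : V, w ≠ u → w ≠ v → inDeg (reverseAlong A p) w ≤ inDeg A w := by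
    intro w hwu hwv
    exact deg_other A p hnd hch hne w (by rw [hu]; exact hwu) (by rw [hv]; exact hwv)
  apply lex_aux (degSeq V A) (degSeq V (reverseAlong A p)) (degSeq_sorted A)
    (degSeq_sorted _) (by rw [degSeq_length, degSeq_length]) (inDeg A v)
  · rw [degSeq_countP, degSeq_countP]
    apply Finset.card_lt_card
    have hsub : (Finset.univ.filter (fun w => inDeg A v ≤ inDeg (reverseAlong A p) w)) ⊆
        (Finset.univ.filter (fun w => inDeg A v ≤ inDeg A w)) := by
      intro w hw
      rw [Finset.mem_filter] at hw ⊢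
      refine ⟨Finset.mem_univ _, ?_⟩
      by_cases hwu : w = u
      · subst hwu; omega
      · by_cases hwv : w = v
        · subst hwv; omega
        · have := hoth w hwu hwv; omega
    rw [Finset.ssubset_iff_of_subset hsub]
    refine ⟨v, ?_, ?_⟩
    · rw [Finset.mem_filter]; exact ⟨Finset.mem_univ _, le_refl _⟩
    · rw [Finset.mem_filter]; push_neg; intro _; omega
  · intro t ht
    rw [degSeq_countP, degSeq_countP]
    apply Finset.card_le_card
    intro w hw
    rw [Finset.mem_filter] at hw ⊢
    refine ⟨Finset.mem_univ _, ?_⟩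
    by_cases hwu : w = u
    · subst hwu; omega
    · by_cases hwv : w = v
      · subst hwv; omega
      · have := hoth w hwu hwv; omega
end

section
/- Let D = (V, Λ) be a strongly connected digraph containing a strongly reversible directed path P from u to v (i.e., d⁻(u) < d⁻(v) − 1 and u two-reaches v). Then the digraph obtained from D by reversing every arc of P is strongly connected and its indegree sequence is strictly smaller in lexicographic order than that of D. -/
namespace Stmt12Aux
open List Relation

variable {V : Type*}

theorem listArcs_cons_cons (a b : V) (l : List V) :
    listArcs (a :: b :: l) = (a, b) :: listArcs (b :: l) := rfl

theorem mem_listArcs {l : List V} {a b : V} (h : (a, b) ∈ listArcs l) :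
    a ∈ l ∧ b ∈ l.tail := by
  induction l with
  | nil => simp [listArcs] at h
  | cons x t ih =>
    cases t with
    | nil => simp [listArcs] at h
    | cons y s =>
      rw [listArcs_cons_cons] at h
      rcases List.mem_cons.1 h with h | h
      · obtain ⟨rfl, rfl⟩ := Prod.mk.injEq a b x y ▸ h
        exact ⟨List.mem_cons_self, List.mem_cons_self⟩
      · obtain ⟨h1, h2⟩ := ih h
        exact ⟨List.mem_cons_of_mem _ h1, by simpa using List.mem_of_mem_tail h2⟩

theorem chain'_arc {R : V → V → Prop} {l : List V} (hc : l.Chain' R) {a b : V}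
    (h : (a, b) ∈ listArcs l) : R a b := by
  induction l with
  | nil => simp [listArcs] at h
  | cons x t ih =>
    cases t with
    | nil => simp [listArcs] at h
    | cons y s =>
      rw [listArcs_cons_cons] at h
      obtain ⟨hxy, hc'⟩ := List.isChain_cons_cons.1 hc
      rcases List.mem_cons.1 h with h | h
      · obtain ⟨rfl, rfl⟩ := Prod.mk.injEq a b x y ▸ h
        exact hxy
      · exact ih hc' h

theorem head_not_snd {l : List V} (hnd : l.Nodup) {u : V} (hh : l.head? = some u)
    (a : V) : (a, u) ∉ listArcs l := by
  intro h
  have hmem := (mem_listArcs h).2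
  cases l with
  | nil => simp at hh
  | cons x t =>
    obtain rfl : x = u := by simpa using hh
    exact (List.nodup_cons.1 hnd).1 hmem

theorem last_not_fst {l : List V} (hnd : l.Nodup) {v : V} (hl : l.getLast? = some v)
    (b : V) : (v, b) ∉ listArcs l := by
  induction l with
  | nil => simp [listArcs]
  | cons x t ih =>
    cases t with
    | nil => simp [listArcs]
    | cons y s =>
      rw [listArcs_cons_cons]
      rw [List.getLast?_cons_cons] at hl
      intro h
      rcases List.mem_cons.1 h with h | h
      · obtain ⟨rfl, rfl⟩ := Prod.mk.injEq v b x y ▸ h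
        exact (List.nodup_cons.1 hnd).1 (List.mem_of_mem_getLast? hl)
      · exact ih (List.nodup_cons.1 hnd).2 hl h

theorem exists_pred {l : List V} {w : V} (hw : w ∈ l) :
    ∀ u, l.head? = some u → w ≠ u → ∃ a, (a, w) ∈ listArcs l := by
  induction l with
  | nil => simp at hw
  | cons x t ih =>
    intro u hh hne
    have hxu : x = u := by simpa using hh
    have hwt : w ∈ t := by
      rcases List.mem_cons.1 hw with h | h
      · exact absurd (h.trans hxu) hne
      · exact h
    cases t with
    | nil => simp at hwt
    | cons y s =>
      by_cases hwy : w = y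
      · subst hwy; exact ⟨x, by rw [listArcs_cons_cons]; exact List.mem_cons_self⟩
      · obtain ⟨a, ha⟩ := ih hwt y rfl hwy
        exact ⟨a, by rw [listArcs_cons_cons]; exact List.mem_cons_of_mem _ ha⟩

theorem fst_unique {l : List V} (hnd : l.Nodup) {w b b' : V}
    (h1 : (w, b) ∈ listArcs l) (h2 : (w, b') ∈ listArcs l) : b = b' := by
  induction l with
  | nil => simp [listArcs] at h1
  | cons x t ih =>
    cases t with
    | nil => simp [listArcs] at h1
    | cons y s =>
      rw [listArcs_cons_cons] at h1 h2
      have hnx : x ∉ y :: s := (List.nodup_cons.1 hnd).1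
      rcases List.mem_cons.1 h1 with h1 | h1 <;> rcases List.mem_cons.1 h2 with h2 | h2
      · exact (Prod.mk.inj h1).2.trans (Prod.mk.inj h2).2.symm
      · exact absurd (by rw [← (Prod.mk.inj h1).1]; exact (mem_listArcs h2).1) hnx
      · exact absurd (by rw [← (Prod.mk.inj h2).1]; exact (mem_listArcs h1).1) hnx
      · exact ih (List.nodup_cons.1 hnd).2 h1 h2

theorem walk_from_head {R : V → V → Prop} {l : List V} :
    ∀ u, l.head? = some u → (∀ a b, (a, b) ∈ listArcs l → R a b) →
      ∀ x ∈ l, Relation.ReflTransGen R u x := by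
  induction l with
  | nil => intro u hh; simp at hh
  | cons z t ih =>
    intro u hh H x hx
    have hzu : z = u := by simpa using hh
    subst hzu
    rcases List.mem_cons.1 hx with rfl | hx
    · exact Relation.ReflTransGen.refl
    · cases t with
      | nil => simp at hx
      | cons w s =>
        have hzw : R z w := H z w (by rw [listArcs_cons_cons]; exact List.mem_cons_self)
        have ihx := ih w rfl
          (fun a b h => H a b (by rw [listArcs_cons_cons]; exact List.mem_cons_of_mem _ h)) x hx
        exact Relation.ReflTransGen.head hzw ihx

theorem walk_to_head {R : V → V → Prop} {l : List V} :
    ∀ u, l.head? = some u → (∀ a b, (a, b) ∈ listArcs l → R b a) →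
      ∀ x ∈ l, Relation.ReflTransGen R x u := by
  induction l with
  | nil => intro u hh; simp at hh
  | cons z t ih =>
    intro u hh H x hx
    have hzu : z = u := by simpa using hh
    subst hzu
    rcases List.mem_cons.1 hx with rfl | hx
    · exact Relation.ReflTransGen.refl
    · cases t with
      | nil => simp at hx
      | cons w s =>
        have hwz : R w z := H z w (by rw [listArcs_cons_cons]; exact List.mem_cons_self)
        have ihx := ih w rfl
          (fun a b h => H a b (by rw [listArcs_cons_cons]; exact List.mem_cons_of_mem _ h)) x hx
        exact Relation.ReflTransGen.tail ihx hwz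

theorem walk_from_last {R : V → V → Prop} {l : List V} :
    ∀ v, l.getLast? = some v → (∀ a b, (a, b) ∈ listArcs l → R b a) →
      ∀ x ∈ l, Relation.ReflTransGen R v x := by
  induction l with
  | nil => intro v hl; simp at hl
  | cons z t ih =>
    intro v hl H x hx
    cases t with
    | nil =>
      obtain rfl : z = v := by simpa using hl
      rcases List.mem_cons.1 hx with rfl | hx
      · exact Relation.ReflTransGen.refl
      · simp at hx
    | cons w s =>
      rw [List.getLast?_cons_cons] at hl
      have ihx := ih v hl
        (fun a b h => H a b (by rw [listArcs_cons_cons]; exact List.mem_cons_of_mem _ h))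
      rcases List.mem_cons.1 hx with rfl | hx
      · have hwz : R w x := H x w (by rw [listArcs_cons_cons]; exact List.mem_cons_self)
        exact Relation.ReflTransGen.tail (ihx w (List.mem_cons_self)) hwz
      · exact ihx x hx

theorem not_all {Q : V → Prop} {l : List V} :
    ∀ h, (∀ a b, (a, b) ∈ listArcs l → (Q b → Q a)) → l.head? = some h → ¬ Q h →
      ∀ z ∈ l, ¬ Q z := by
  induction l with
  | nil => intro h _ hh; simp at hh
  | cons z t ih =>
    intro h H hh hnh x hx
    have hzh : z = h := by simpa using hh
    subst hzh
    rcases List.mem_cons.1 hx with rfl | hx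
    · exact hnh
    · cases t with
      | nil => simp at hx
      | cons w s =>
        have hnw : ¬ Q w := fun hq =>
          hnh (H z w (by rw [listArcs_cons_cons]; exact List.mem_cons_self) hq)
        have Ht : ∀ a b, (a, b) ∈ listArcs (w :: s) → (Q b → Q a) := fun a b hm =>
          H a b (by rw [listArcs_cons_cons]; exact List.mem_cons_of_mem _ hm)
        exact ih w Ht rfl hnw x hx

theorem unique_cross {Q : V → Prop} {l : List V} :
    ∀ {a b c d : V}, (∀ x y, (x, y) ∈ listArcs l → (Q y → Q x)) →
      (a, b) ∈ listArcs l → (c, d) ∈ listArcs l → Q a → ¬ Q b → Q c → ¬ Q d →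
      a = c ∧ b = d := by
  induction l with
  | nil => intro a b c d _ h1; simp [listArcs] at h1
  | cons z t ih =>
    intro a b c d H h1 h2 hQa hQb hQc hQd
    cases t with
    | nil => simp [listArcs] at h1
    | cons w s =>
      rw [listArcs_cons_cons] at h1 h2
      have Ht : ∀ x y, (x, y) ∈ listArcs (w :: s) → (Q y → Q x) :=
        fun x y hm => H x y (by rw [listArcs_cons_cons]; exact List.mem_cons_of_mem _ hm)
      rcases List.mem_cons.1 h1 with h1 | h1 <;> rcases List.mem_cons.1 h2 with h2 | h2
      · exact ⟨(Prod.mk.inj h1).1.trans (Prod.mk.inj h2).1.symm,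
          (Prod.mk.inj h1).2.trans (Prod.mk.inj h2).2.symm⟩
      · have hnw : ¬ Q w := by rw [← (Prod.mk.inj h1).2]; exact hQb
        exact absurd hQc (not_all w Ht rfl hnw c (mem_listArcs h2).1)
      · have hnw : ¬ Q w := by rw [← (Prod.mk.inj h2).2]; exact hQd
        exact absurd hQa (not_all w Ht rfl hnw a (mem_listArcs h1).1)
      · exact ih Ht h1 h2 hQa hQb hQc hQd

theorem exists_cross {Q : V → Prop} {l : List V} :
    ∀ x y, l.head? = some x → l.getLast? = some y → Q x → ¬ Q y →
      ∃ a b, (a, b) ∈ listArcs l ∧ Q a ∧ ¬ Q b := by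
  induction l with
  | nil => intro x y hh; simp at hh
  | cons z t ih =>
    intro x y hh hl hQx hQy
    have hzx : z = x := by simpa using hh
    subst hzx
    cases t with
    | nil =>
      obtain rfl : z = y := by simpa using hl
      exact absurd hQx hQy
    | cons w s =>
      rw [List.getLast?_cons_cons] at hl
      by_cases hQw : Q w
      · obtain ⟨a, b, hm, h1, h2⟩ := ih w y rfl hl hQw hQy
        exact ⟨a, b, by rw [listArcs_cons_cons]; exact List.mem_cons_of_mem _ hm, h1, h2⟩
      · exact ⟨z, w, by rw [listArcs_cons_cons]; exact List.mem_cons_self, hQx, hQw⟩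


theorem rtg_of_reaches {A : Finset (V × V)} {x y : V} (h : Reaches A x y) :
    Relation.ReflTransGen (fun a b => (a, b) ∈ A) x y := by
  obtain ⟨q, hq0, hqh, hql, hqnd, hqc⟩ := h
  exact walk_from_head x hqh (fun a b hm => chain'_arc hqc hm) y (List.mem_of_mem_getLast? hql)

theorem reaches_of_rtg {A : Finset (V × V)} {x y : V}
    (h : Relation.ReflTransGen (fun a b => (a, b) ∈ A) x y) : Reaches A x y := by
  induction h using Relation.ReflTransGen.head_induction_on with
  | refl =>
    exact ⟨[y], List.cons_ne_nil _ _, rfl, rfl, List.nodup_singleton _, List.isChain_singleton _⟩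
  | @head a c hxc hcy ih =>
    obtain ⟨q, hq0, hqh, hql, hqnd, hqc⟩ := ih
    by_cases hxq : a ∈ q
    · obtain ⟨s, t, rfl⟩ := List.append_of_mem hxq
      refine ⟨a :: t, List.cons_ne_nil _ _, rfl, ?_, ?_, ?_⟩
      · rw [List.getLast?_append] at hql
        obtain ⟨z, hz⟩ := Option.isSome_iff_exists.1
          (List.getLast?_isSome.2 (List.cons_ne_nil a t))
        rw [hz] at hql ⊢
        exact hql
      · exact List.Nodup.sublist (List.sublist_append_right s (a :: t)) hqnd
      · exact (List.isChain_append.1 hqc).2.1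
    · refine ⟨a :: q, List.cons_ne_nil _ _, rfl, ?_, List.nodup_cons.2 ⟨hxq, hqnd⟩, ?_⟩
      · cases q with
        | nil => exact absurd rfl hq0
        | cons b t => rw [List.getLast?_cons_cons]; exact hql
      · refine List.isChain_cons.2 ⟨fun z hz => ?_, hqc⟩
        rw [hqh] at hz
        obtain rfl := Option.mem_some_iff.1 hz
        exact hxc

theorem rtg_trans_lift {R R' : V → V → Prop}
    (H : ∀ a b, R a b → Relation.ReflTransGen R' a b) {x y : V}
    (h : Relation.ReflTransGen R x y) : Relation.ReflTransGen R' x y := by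
  induction h with
  | refl => exact Relation.ReflTransGen.refl
  | tail _ hbc ih => exact ih.trans (H _ _ hbc)

variable [DecidableEq V]

theorem mem_rev_of_arc {A : Finset (V × V)} {p : List V} {a b : V}
    (h : (a, b) ∈ listArcs p) : (b, a) ∈ reverseAlong A p :=
  Finset.mem_union_right _ (List.mem_toFinset.2 (List.mem_map.2 ⟨(a, b), h, rfl⟩))

theorem arc_of_not_mem_rev {A : Finset (V × V)} {p : List V} {e : V × V}
    (he : e ∈ A) (h : e ∉ reverseAlong A p) : e ∈ listArcs p := by
  by_contra hn
  exact h (Finset.mem_union_left _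
    (Finset.mem_sdiff.2 ⟨he, fun hm => hn (List.mem_toFinset.1 hm)⟩))

theorem rev_strongly_connected {A : Finset (V × V)} {u v : V} {p : List V}
    (hsc : StronglyConnected A) (hp : IsDipath A u v p) (h2 : TwoReaches A u v) :
    StronglyConnected (reverseAlong A p) := by
  obtain ⟨hp0, hph, hpl, hpnd, hpc⟩ := id hp
  have hrevarc : ∀ a b, (a, b) ∈ listArcs p →
      (fun a b => (a, b) ∈ reverseAlong A p) b a := fun a b h => mem_rev_of_arc h
  have L1 : Relation.ReflTransGen (fun a b => (a, b) ∈ reverseAlong A p) u v := by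
    by_contra hv
    obtain ⟨q1, q2, hq1, hq2, hdisj⟩ := h2
    have hQu : Relation.ReflTransGen (fun a b => (a, b) ∈ reverseAlong A p) u u :=
      Relation.ReflTransGen.refl
    obtain ⟨a1, b1, hm1, haq1, hbq1⟩ :=
      exists_cross (Q := fun x => Relation.ReflTransGen
        (fun a b => (a, b) ∈ reverseAlong A p) u x) u v hq1.2.1 hq1.2.2.1 hQu hv
    obtain ⟨a2, b2, hm2, haq2, hbq2⟩ :=
      exists_cross (Q := fun x => Relation.ReflTransGen
        (fun a b => (a, b) ∈ reverseAlong A p) u x) u v hq2.2.1 hq2.2.2.1 hQu hv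
    have hA1 : (a1, b1) ∈ A := chain'_arc hq1.2.2.2.2 hm1
    have hA2 : (a2, b2) ∈ A := chain'_arc hq2.2.2.2.2 hm2
    have hp1 : (a1, b1) ∈ listArcs p :=
      arc_of_not_mem_rev hA1 (fun h => hbq1 (haq1.tail h))
    have hp2 : (a2, b2) ∈ listArcs p :=
      arc_of_not_mem_rev hA2 (fun h => hbq2 (haq2.tail h))
    have hmono : ∀ x y, (x, y) ∈ listArcs p →
        (Relation.ReflTransGen (fun a b => (a, b) ∈ reverseAlong A p) u y →
          Relation.ReflTransGen (fun a b => (a, b) ∈ reverseAlong A p) u x) :=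
      fun x y hm hy => hy.tail (hrevarc x y hm)
    obtain ⟨he1, he2⟩ := unique_cross hmono hp1 hp2 haq1 hbq1 haq2 hbq2
    exact hdisj (a1, b1) hm1 (by rw [he1, he2]; exact hm2)
  have step : ∀ a b, (a, b) ∈ A →
      Relation.ReflTransGen (fun a b => (a, b) ∈ reverseAlong A p) a b := by
    intro a b hab
    by_cases h : (a, b) ∈ reverseAlong A p
    · exact Relation.ReflTransGen.single h
    · have harc := arc_of_not_mem_rev hab h
      have ha := (mem_listArcs harc).1
      have hb := List.mem_of_mem_tail (mem_listArcs harc).2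
      have h1 := walk_to_head u hph hrevarc a ha
      have h2' := walk_from_last v hpl hrevarc b hb
      exact (h1.trans L1).trans h2'
  intro x y
  exact reaches_of_rtg (rtg_trans_lift step (rtg_of_reaches (hsc x y)))

theorem inDeg_rev_le {A : Finset (V × V)} {p : List V}
    (hPA : (listArcs p).toFinset ⊆ A) (w : V) :
    inDeg (reverseAlong A p) w ≤
      inDeg A w - ((listArcs p).toFinset.filter (fun e => e.2 = w)).card
        + (((listArcs p).map Prod.swap).toFinset.filter (fun e => e.2 = w)).card := by
  simp only [inDeg, reverseAlong]
  rw [Finset.filter_union]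
  refine le_trans (Finset.card_union_le _ _) ?_
  have h2 : (A \ (listArcs p).toFinset).filter (fun e => e.2 = w)
      = A.filter (fun e => e.2 = w) \ (listArcs p).toFinset.filter (fun e => e.2 = w) := by
    ext e
    simp only [Finset.mem_filter, Finset.mem_sdiff]
    tauto
  rw [h2, Finset.card_sdiff_of_subset (Finset.filter_subset_filter _ hPA)]

theorem cntS_le_one {p : List V} (hnd : p.Nodup) (w : V) :
    (((listArcs p).map Prod.swap).toFinset.filter (fun e => e.2 = w)).card ≤ 1 := by
  rw [Finset.card_le_one]
  intro e1 h1 e2 h2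
  obtain ⟨hm1, hw1⟩ := Finset.mem_filter.1 h1
  obtain ⟨hm2, hw2⟩ := Finset.mem_filter.1 h2
  obtain ⟨f1, hf1, he1⟩ := List.mem_map.1 (List.mem_toFinset.1 hm1)
  obtain ⟨f2, hf2, he2⟩ := List.mem_map.1 (List.mem_toFinset.1 hm2)
  obtain ⟨x1, y1⟩ := f1
  obtain ⟨x2, y2⟩ := f2
  rw [Prod.swap_prod_mk] at he1 he2
  subst he1
  subst he2
  have hx1 : x1 = w := hw1
  have hx2 : x2 = w := hw2
  subst hx1
  subst hx2
  have : y1 = y2 := fst_unique hnd hf1 hf2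
  rw [this]

theorem cntS_last_eq_zero {p : List V} (hnd : p.Nodup) {v : V} (hl : p.getLast? = some v) :
    (((listArcs p).map Prod.swap).toFinset.filter (fun e => e.2 = v)).card = 0 := by
  rw [Finset.card_eq_zero, Finset.eq_empty_iff_forall_notMem]
  intro e he
  obtain ⟨hm, hw⟩ := Finset.mem_filter.1 he
  obtain ⟨f, hf, hef⟩ := List.mem_map.1 (List.mem_toFinset.1 hm)
  obtain ⟨x, y⟩ := f
  rw [Prod.swap_prod_mk] at hef
  subst hef
  have hx : x = v := hw
  subst hx
  exact last_not_fst hnd hl y hf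

theorem cntP_last_pos {p : List V} {u v : V} (hh : p.head? = some u)
    (hl : p.getLast? = some v) (hne : v ≠ u) :
    0 < ((listArcs p).toFinset.filter (fun e => e.2 = v)).card := by
  obtain ⟨a, ha⟩ := exists_pred (List.mem_of_mem_getLast? hl) u hh hne
  exact Finset.card_pos.2 ⟨(a, v), Finset.mem_filter.2 ⟨List.mem_toFinset.2 ha, rfl⟩⟩

theorem cntP_pos_of_cntS_pos {p : List V} {u w : V} (hh : p.head? = some u) (hne : w ≠ u)
    (h : 0 < (((listArcs p).map Prod.swap).toFinset.filter (fun e => e.2 = w)).card) :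
    0 < ((listArcs p).toFinset.filter (fun e => e.2 = w)).card := by
  obtain ⟨e, he⟩ := Finset.card_pos.1 h
  obtain ⟨hm, hw⟩ := Finset.mem_filter.1 he
  obtain ⟨f, hf, hef⟩ := List.mem_map.1 (List.mem_toFinset.1 hm)
  obtain ⟨x, y⟩ := f
  rw [Prod.swap_prod_mk] at hef
  subst hef
  have hx : x = w := hw
  rw [hx] at hf
  obtain ⟨a, ha⟩ := exists_pred (mem_listArcs hf).1 u hh hne
  exact Finset.card_pos.2 ⟨(a, w), Finset.mem_filter.2 ⟨List.mem_toFinset.2 ha, rfl⟩⟩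

theorem degSeq_length [Fintype V] (A : Finset (V × V)) :
    (degSeq V A).length = Fintype.card V := by
  rw [degSeq, List.length_reverse, Multiset.length_sort, Multiset.card_map]
  rfl

theorem degSeq_sorted [Fintype V] (A : Finset (V × V)) :
    (degSeq V A).Pairwise (fun a b => b ≤ a) := by
  rw [degSeq]
  exact List.pairwise_reverse.2 (Multiset.pairwise_sort _ _)

theorem degSeq_map_sum [Fintype V] (B : ℕ) (A : Finset (V × V)) :
    ((degSeq V A).map (B ^ ·)).sum = ∑ w : V, B ^ inDeg A w := by
  rw [degSeq, List.map_reverse, List.sum_reverse]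
  have key : ∀ (m : Multiset ℕ), ((m.sort (· ≤ ·)).map (B ^ ·)).sum = (m.map (B ^ ·)).sum := by
    intro m
    calc ((m.sort (· ≤ ·)).map (B ^ ·)).sum
        = ((↑((m.sort (· ≤ ·)).map (B ^ ·)) : Multiset ℕ)).sum := (Multiset.sum_coe _).symm
      _ = ((↑(m.sort (· ≤ ·)) : Multiset ℕ).map (B ^ ·)).sum := by rw [Multiset.map_coe]
      _ = (m.map (B ^ ·)).sum := by rw [Multiset.sort_eq]
  rw [key, Multiset.map_map, Finset.sum_eq_multiset_sum]
  rfl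

theorem lex_aux (B : ℕ) (hB : 0 < B) :
    ∀ (l l' : List ℕ), l'.length = l.length → l.length < B →
      l.Pairwise (fun a b => b ≤ a) → l'.Pairwise (fun a b => b ≤ a) →
      (l'.map (B ^ ·)).sum < (l.map (B ^ ·)).sum → List.Lex (· < ·) l' l := by
  intro l
  induction l with
  | nil =>
    intro l' hlen _ _ _ hsum
    rw [List.length_nil, List.length_eq_zero_iff] at hlen
    subst hlen
    simp at hsum
  | cons a t ih =>
    intro l' hlen hltB hsl hsl' hsum
    cases l' with
    | nil => simp at hlen
    | cons a' t' =>
      rcases lt_trichotomy a' a with h | h | h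
      · exact List.Lex.rel h
      · subst h
        refine List.Lex.cons (ih t' (by simpa using hlen) ?_ hsl.of_cons hsl'.of_cons ?_)
        · simp only [List.length_cons] at hltB; omega
        · simp only [List.map_cons, List.sum_cons] at hsum
          exact Nat.lt_of_add_lt_add_left hsum
      · exfalso
        have h1 : ((a :: t).map (B ^ ·)).sum ≤ (a :: t).length * B ^ a := by
          have hb : ∀ x ∈ (a :: t).map (B ^ ·), x ≤ B ^ a := by
            intro x hx
            obtain ⟨y, hy, rfl⟩ := List.mem_map.1 hx
            rcases List.mem_cons.1 hy with rfl | hy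
            · exact le_refl _
            · exact Nat.pow_le_pow_right hB (List.rel_of_pairwise_cons hsl hy)
          have := List.sum_le_card_nsmul ((a :: t).map (B ^ ·)) (B ^ a) hb
          simpa [List.length_map, smul_eq_mul] using this
        have h2 : (a :: t).length * B ^ a < B * B ^ a :=
          Nat.mul_lt_mul_of_lt_of_le hltB (le_refl _) (pow_pos hB a)
        have h3 : B * B ^ a = B ^ (a + 1) := by rw [pow_succ, Nat.mul_comm]
        have h4 : B ^ (a + 1) ≤ B ^ a' := Nat.pow_le_pow_right hB h
        have h5 : B ^ a' ≤ ((a' :: t').map (B ^ ·)).sum := by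
          simp only [List.map_cons, List.sum_cons]
          exact Nat.le_add_right _ _
        omega

end Stmt12Aux

/-- Reversing a strongly reversible directed path (from `u` to `v` with
`d⁻(u) < d⁻(v) - 1` and `u` two-reaching `v`) in a strongly connected digraph keeps the
digraph strongly connected and strictly decreases the indegree sequence in lexicographic
order. -/
theorem stmt_12 {V : Type*} [Fintype V] [DecidableEq V] (A : Finset (V × V))
    (hsc : StronglyConnected A) (u v : V) (p : List V) (hp : IsDipath A u v p)
    (hdeg : inDeg A u + 1 < inDeg A v) (h2 : TwoReaches A u v) :
    StronglyConnected (reverseAlong A p) ∧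
      List.Lex (· < ·) (degSeq V (reverseAlong A p)) (degSeq V A) := by
  classical
  obtain ⟨hp0, hph, hpl, hpnd, hpc⟩ := id hp
  have hne : u ≠ v := fun h => by rw [h] at hdeg; omega
  have hPA : (listArcs p).toFinset ⊆ A := by
    intro e he
    obtain ⟨a, b⟩ := e
    exact Stmt12Aux.chain'_arc hpc (List.mem_toFinset.1 he)
  constructor
  · exact Stmt12Aux.rev_strongly_connected hsc hp h2
  · set B := Fintype.card V + 1 with hB
    have hcard : 2 ≤ Fintype.card V := Fintype.one_lt_card_iff_nontrivial.2 ⟨⟨u, v, hne⟩⟩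
    have hboundv : inDeg (reverseAlong A p) v + 1 ≤ inDeg A v := by
      have h1 := Stmt12Aux.inDeg_rev_le hPA v
      have h2' := Stmt12Aux.cntP_last_pos hph hpl (Ne.symm hne)
      have h3 := Stmt12Aux.cntS_last_eq_zero hpnd hpl
      have h4 : ((listArcs p).toFinset.filter (fun e => e.2 = v)).card ≤ inDeg A v :=
        Finset.card_le_card (Finset.filter_subset_filter _ hPA)
      omega
    have hboundu : inDeg (reverseAlong A p) u ≤ inDeg A u + 1 := by
      have h1 := Stmt12Aux.inDeg_rev_le hPA u
      have h2' := Stmt12Aux.cntS_le_one hpnd u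
      omega
    have hboundw : ∀ w, w ≠ u → w ≠ v → inDeg (reverseAlong A p) w ≤ inDeg A w := by
      intro w hwu hwv
      have h1 := Stmt12Aux.inDeg_rev_le hPA w
      have h4 : ((listArcs p).toFinset.filter (fun e => e.2 = w)).card ≤ inDeg A w :=
        Finset.card_le_card (Finset.filter_subset_filter _ hPA)
      rcases Nat.eq_zero_or_pos
          ((((listArcs p).map Prod.swap).toFinset.filter (fun e => e.2 = w)).card) with h | h
      · omega
      · have h5 := Stmt12Aux.cntP_pos_of_cntS_pos hph hwu h
        have h6 := Stmt12Aux.cntS_le_one hpnd w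
        omega
    have hsum : ∑ w : V, B ^ inDeg (reverseAlong A p) w < ∑ w : V, B ^ inDeg A w := by
      have hsplit1 := Finset.sum_sdiff (Finset.subset_univ ({u, v} : Finset V))
        (f := fun w => B ^ inDeg (reverseAlong A p) w)
      have hsplit2 := Finset.sum_sdiff (Finset.subset_univ ({u, v} : Finset V))
        (f := fun w => B ^ inDeg A w)
      rw [← hsplit1, ← hsplit2, Finset.sum_pair hne, Finset.sum_pair hne]
      have hrest : ∑ w ∈ Finset.univ \ {u, v}, B ^ inDeg (reverseAlong A p) w
          ≤ ∑ w ∈ Finset.univ \ {u, v}, B ^ inDeg A w := by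
        refine Finset.sum_le_sum fun w hw => ?_
        simp only [Finset.mem_sdiff, Finset.mem_insert, Finset.mem_singleton, not_or,
          Finset.mem_univ, true_and] at hw
        exact Nat.pow_le_pow_right (by omega) (hboundw w hw.1 hw.2)
      have hpairs : B ^ inDeg (reverseAlong A p) u + B ^ inDeg (reverseAlong A p) v
          < B ^ inDeg A u + B ^ inDeg A v := by
        obtain ⟨k, hk⟩ : ∃ k, inDeg A v = k + 1 := ⟨inDeg A v - 1, by omega⟩
        have e1 : B ^ inDeg (reverseAlong A p) u ≤ B ^ k :=
          Nat.pow_le_pow_right (by omega) (by omega)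
        have e2 : B ^ inDeg (reverseAlong A p) v ≤ B ^ k :=
          Nat.pow_le_pow_right (by omega) (by omega)
        have e3 : 2 * B ^ k < B ^ inDeg A v := by
          calc 2 * B ^ k < B * B ^ k :=
                Nat.mul_lt_mul_of_lt_of_le (by omega) (le_refl _) (pow_pos (by omega) k)
            _ = B ^ inDeg A v := by rw [hk, pow_succ, Nat.mul_comm]
        omega
      exact add_lt_add_of_le_of_lt hrest hpairs
    refine Stmt12Aux.lex_aux B (by omega) (degSeq V A) (degSeq V (reverseAlong A p))
      ?_ ?_ ?_ ?_ ?_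
    · rw [Stmt12Aux.degSeq_length, Stmt12Aux.degSeq_length]
    · rw [Stmt12Aux.degSeq_length]; omega
    · exact Stmt12Aux.degSeq_sorted _
    · exact Stmt12Aux.degSeq_sorted _
    · rw [Stmt12Aux.degSeq_map_sum, Stmt12Aux.degSeq_map_sum]
      exact hsum
end

section
/- Let G = (V, E) be a simple undirected graph with two strongly connected orientations Λ₁ and Λ₂, let v ∈ V, and let U be the set of vertices that two-reach v in the digraph D₁ = (V, Λ₁). Then the sum over u ∈ U of the indegree of u in Λ₂ is at least the sum over u ∈ U of the indegree of u in Λ₁. -/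
namespace StmtAux
variable {V : Type*} [DecidableEq V]

/-- reachability via arcs in a finite arc set -/
def Reach [DecidableEq V] (E : Finset (V × V)) (x y : V) : Prop :=
  Relation.ReflTransGen (fun p q => (p, q) ∈ E) x y

lemma listArcs_cons₂ (a b : V) (t : List V) :
    listArcs (a :: b :: t) = (a, b) :: listArcs (b :: t) := rfl

lemma arc_fst_mem {e : V × V} : ∀ {p : List V}, e ∈ listArcs p → e.1 ∈ p
  | [], h => by simp [listArcs] at h
  | [a], h => by simp [listArcs] at h
  | a :: b :: t, h => by
    rw [listArcs_cons₂] at h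
    rcases List.mem_cons.1 h with h | h
    · subst h; simp
    · exact List.mem_cons_of_mem _ (arc_fst_mem h)

lemma arc_snd_mem_tail {e : V × V} : ∀ {p : List V}, e ∈ listArcs p → e.2 ∈ p.tail
  | [], h => by simp [listArcs] at h
  | [a], h => by simp [listArcs] at h
  | a :: b :: t, h => by
    rw [listArcs_cons₂] at h
    rcases List.mem_cons.1 h with h | h
    · subst h; simp
    · exact List.mem_cons_of_mem _ (arc_snd_mem_tail h)

lemma arc_snd_mem {e : V × V} {p : List V} (h : e ∈ listArcs p) : e.2 ∈ p :=
  List.mem_of_mem_tail (arc_snd_mem_tail h)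

lemma chain'_iff_arcs {R : V → V → Prop} : ∀ {p : List V},
    p.Chain' R ↔ ∀ e ∈ listArcs p, R e.1 e.2
  | [] => by simp [listArcs, List.Chain', List.isChain_nil]
  | [a] => by simp [listArcs, List.Chain', List.isChain_singleton]
  | a :: b :: t => by
    rw [List.Chain', List.isChain_cons_cons, listArcs_cons₂]
    constructor
    · rintro ⟨hab, hc⟩ e he
      rcases List.mem_cons.1 he with rfl | he
      · exact hab
      · exact (chain'_iff_arcs.1 hc) e he
    · intro h
      exact ⟨h _ List.mem_cons_self, chain'_iff_arcs.2 fun e he => h e (List.mem_cons_of_mem _ he)⟩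

lemma arcs_prefix_subset {e : V × V} : ∀ {p r : List V}, e ∈ listArcs p → e ∈ listArcs (p ++ r)
  | [], r, h => by simp [listArcs] at h
  | [a], r, h => by simp [listArcs] at h
  | a :: b :: t, r, h => by
    rw [listArcs_cons₂] at h
    rcases List.mem_cons.1 h with rfl | h
    · rw [List.cons_append, List.cons_append, listArcs_cons₂]; simp
    · rw [List.cons_append, List.cons_append, listArcs_cons₂]
      rw [← List.cons_append]
      exact List.mem_cons_of_mem _ (arcs_prefix_subset h)

lemma listArcs_concat : ∀ {p : List V} {z : V} (c : V), p.getLast? = some z →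
    listArcs (p ++ [c]) = listArcs p ++ [(z, c)]
  | [], z, c, h => by simp at h
  | [a], z, c, h => by
    simp at h; subst h; rfl
  | a :: b :: t, z, c, h => by
    rw [List.getLast?_cons_cons] at h
    rw [List.cons_append, List.cons_append, listArcs_cons₂, ← List.cons_append,
      listArcs_concat c h, listArcs_cons₂]
    rfl

lemma reach_of_path [DecidableEq V] {E : Finset (V × V)} :
    ∀ {p : List V} {x y : V}, p.head? = some x → p.getLast? = some y →
      (∀ e ∈ listArcs p, e ∈ E) → Reach E x y
  | [], x, y, hh, _, _ => by simp at hh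
  | [a], x, y, hh, hl, _ => by
    simp at hh hl; subst hh; subst hl; exact Relation.ReflTransGen.refl
  | a :: b :: t, x, y, hh, hl, harcs => by
    simp at hh; subst hh
    rw [List.getLast?_cons_cons] at hl
    refine Relation.ReflTransGen.head ?_ (reach_of_path (p := b :: t) rfl hl ?_)
    · exact harcs _ (by rw [listArcs_cons₂]; simp)
    · intro e he; exact harcs e (by rw [listArcs_cons₂]; exact List.mem_cons_of_mem _ he)

lemma dipath_of_reach [DecidableEq V] {E : Finset (V × V)} {x y : V} (h : Reach E x y) :
    ∃ p : List V, p ≠ [] ∧ p.head? = some x ∧ p.getLast? = some y ∧ p.Nodup ∧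
      ∀ e ∈ listArcs p, e ∈ E := by
  induction h with
  | refl => exact ⟨[x], by simp, by simp, by simp, by simp, by simp [listArcs]⟩
  | tail _ hbc ih =>
    rename_i b c _
    obtain ⟨p, hne, hh, hl, hnd, harcs⟩ := ih
    by_cases hc : c ∈ p
    · obtain ⟨l₁, l₂, rfl⟩ := List.append_of_mem hc
      refine ⟨l₁ ++ [c], by simp, ?_, by simp, ?_, ?_⟩
      · cases l₁ with
        | nil => simpa using hh
        | cons a t => simpa using hh
      · refine List.Nodup.sublist ?_ hnd
        have : l₁ ++ c :: l₂ = (l₁ ++ [c]) ++ l₂ := by simp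
        rw [this]
        exact List.sublist_append_left (l₁ ++ [c]) l₂
      · intro e he
        exact harcs e (by simpa using arcs_prefix_subset (r := l₂) he)
    · refine ⟨p ++ [c], by simp, ?_, by simp, ?_, ?_⟩
      · cases p with
        | nil => exact absurd rfl hne
        | cons a t => simpa using hh
      · simp [List.nodup_append, hnd, hc]
        exact fun a ha h => hc (h ▸ ha)
      · rw [listArcs_concat c hl]
        intro e he
        rcases List.mem_append.1 he with he | he
        · exact harcs e he
        · simp at he; subst he
          exact hbc




/-- generic first-exit lemma -/
lemma exists_exit {R : V → V → Prop} {P : V → Prop} {x y : V}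
    (h : Relation.ReflTransGen R x y) (hx : P x) (hy : ¬ P y) :
    ∃ s t, P s ∧ ¬ P t ∧ R s t := by
  induction h using Relation.ReflTransGen.head_induction_on with
  | refl => exact absurd hx hy
  | head hst _ ih =>
    rename_i s t _
    by_cases ht : P t
    · exact ih ht
    · exact ⟨s, t, hx, ht, hst⟩

lemma reach_closed {R : V → V → Prop} {P : V → Prop} {x y : V}
    (h : Relation.ReflTransGen R x y) (hx : P x)
    (hcl : ∀ s t, R s t → P s → P t) : P y := by
  by_contra hy
  obtain ⟨s, t, hs, ht, hst⟩ := exists_exit h hx hy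
  exact ht (hcl s t hst hs)

/-- first use decomposition -/
lemma reach_erase_or [DecidableEq V] {E : Finset (V × V)} {d : V × V} {x y : V}
    (h : Reach E x y) : Reach (E.erase d) x y ∨ Reach E d.2 y := by
  induction h using Relation.ReflTransGen.head_induction_on with
  | refl => exact Or.inl Relation.ReflTransGen.refl
  | head hst hrest ih =>
    rename_i s t
    by_cases hd : (s, t) = d
    · right
      have h2 : d.2 = t := by rw [← hd]
      rw [h2]; exact hrest
    · rcases ih with ih | ih
      · exact Or.inl (Relation.ReflTransGen.head (Finset.mem_erase.2 ⟨hd, hst⟩) ih)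
      · exact Or.inr ih

lemma reach_mono [DecidableEq V] {E F : Finset (V × V)} (hEF : E ⊆ F) {x y : V}
    (h : Reach E x y) : Reach F x y :=
  Relation.ReflTransGen.mono (fun _ _ hpq => hEF hpq) _ _ h

/-- backward closure propagates to the head -/
lemma back_closure {S : V → Prop} : ∀ {p : List V} {x : V},
    (∀ e ∈ listArcs p, S e.2 → S e.1) → p.head? = some x → ∀ c ∈ p, S c → S x
  | [], x, _, hh, _, _, _ => by simp at hh
  | [a], x, _, hh, c, hc, hSc => by
    simp at hh hc; subst hh; subst hc; exact hSc
  | a :: b :: t, x, hback, hh, c, hc, hSc => by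
    simp at hh; subst hh
    rcases List.mem_cons.1 hc with rfl | hc
    · exact hSc
    · have hSb : S b := back_closure (p := b :: t)
        (fun e he => hback e (by rw [listArcs_cons₂]; exact List.mem_cons_of_mem _ he)) rfl c hc hSc
      exact hback (a, b) (by rw [listArcs_cons₂]; simp) hSb

/-- unique crossing lemma -/
lemma cross_unique {S : V → Prop} : ∀ {p : List V} {x v : V},
    (∀ e ∈ listArcs p, S e.2 → S e.1) → p.head? = some x → p.getLast? = some v →
    S x → ¬ S v →
    ∃ e₀ ∈ listArcs p, S e₀.1 ∧ ¬ S e₀.2 ∧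
      ∀ e ∈ listArcs p, S e.1 → ¬ S e.2 → e = e₀
  | [], x, v, _, hh, _, _, _ => by simp at hh
  | [a], x, v, _, hh, hl, hx, hv => by
    simp at hh hl; subst hh; subst hl; exact absurd hx hv
  | a :: b :: t, x, v, hback, hh, hl, hx, hv => by
    simp at hh; subst hh
    rw [List.getLast?_cons_cons] at hl
    have hsub : ∀ e ∈ listArcs (b :: t), S e.2 → S e.1 :=
      fun e he => hback e (by rw [listArcs_cons₂]; exact List.mem_cons_of_mem _ he)
    by_cases hb : S b
    · obtain ⟨e₀, he₀, hS1, hS2, huniq⟩ := cross_unique hsub rfl hl hb hv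
      refine ⟨e₀, by rw [listArcs_cons₂]; exact List.mem_cons_of_mem _ he₀, hS1, hS2, ?_⟩
      intro e he hSe1 hSe2
      rw [listArcs_cons₂] at he
      rcases List.mem_cons.1 he with rfl | he
      · exact absurd hb hSe2
      · exact huniq e he hSe1 hSe2
    · refine ⟨(a, b), by rw [listArcs_cons₂]; simp, hx, hb, ?_⟩
      intro e he hSe1 hSe2
      rw [listArcs_cons₂] at he
      rcases List.mem_cons.1 he with rfl | he
      · rfl
      · exact absurd (back_closure hsub rfl e.1 (arc_fst_mem he) hSe1) hb

lemma mem_reverseAlong [DecidableEq V] {A : Finset (V × V)} {p : List V} {e : V × V} :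
    e ∈ reverseAlong A p ↔ (e ∈ A ∧ e ∉ listArcs p) ∨ e.swap ∈ listArcs p := by
  unfold reverseAlong
  simp only [Finset.mem_union, Finset.mem_sdiff, List.mem_toFinset, List.mem_map]
  constructor
  · rintro (⟨h1, h2⟩ | ⟨f, hf, rfl⟩)
    · exact Or.inl ⟨h1, h2⟩
    · exact Or.inr (by simpa using hf)
  · rintro (⟨h1, h2⟩ | h)
    · exact Or.inl ⟨h1, h2⟩
    · exact Or.inr ⟨e.swap, h, by simp⟩

/-- the residual reachability lemma -/
lemma residual_reach [DecidableEq V] {A : Finset (V × V)} {p : List V} {x v : V}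
    (hh : p.head? = some x) (hl : p.getLast? = some v)
    (harcs : ∀ e ∈ listArcs p, e ∈ A)
    (hrob : ∀ e ∈ A, Reach (A.erase e) x v) :
    Reach (reverseAlong A p) x v := by
  by_contra hneg
  set S : V → Prop := fun z => Reach (reverseAlong A p) x z with hS
  have hback : ∀ e ∈ listArcs p, S e.2 → S e.1 := by
    intro e he h2
    exact Relation.ReflTransGen.tail h2 (mem_reverseAlong.2 (Or.inr (by simpa using he)))
  have hx : S x := Relation.ReflTransGen.refl
  obtain ⟨e₀, he₀, hS1, hS2, huniq⟩ := cross_unique hback hh hl hx hneg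
  have he₀A : e₀ ∈ A := harcs _ he₀
  have hSv : S v := by
    refine reach_closed (hrob e₀ he₀A) hx ?_
    intro s t hst hSs
    by_contra hSt
    rcases Finset.mem_erase.1 hst with ⟨hne, hstA⟩
    by_cases hmem : (s, t) ∈ listArcs p
    · exact hne (huniq (s, t) hmem hSs hSt)
    · exact hSt (Relation.ReflTransGen.tail hSs (mem_reverseAlong.2 (Or.inl ⟨hstA, hmem⟩)))
  exact hneg hSv




/-- out-degree -/
def od (F : Finset (V × V)) (z : V) : ℕ := (F.filter (fun e => e.1 = z)).card
/-- in-degree -/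
def idg (F : Finset (V × V)) (z : V) : ℕ := (F.filter (fun e => e.2 = z)).card

lemma map_fst_listArcs : ∀ (p : List V), (listArcs p).map Prod.fst = p.dropLast
  | [] => rfl
  | [a] => rfl
  | a :: b :: t => by
    rw [listArcs_cons₂, List.map_cons, map_fst_listArcs (b :: t)]
    rfl

lemma map_snd_listArcs : ∀ (p : List V), (listArcs p).map Prod.snd = p.tail
  | [] => rfl
  | [a] => rfl
  | a :: b :: t => by
    rw [listArcs_cons₂, List.map_cons, map_snd_listArcs (b :: t)]
    rfl

lemma nodup_listArcs {p : List V} (h : p.Nodup) : (listArcs p).Nodup := by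
  have h1 : ((listArcs p).map Prod.fst).Nodup := by
    rw [map_fst_listArcs]
    exact h.sublist (List.dropLast_sublist p)
  exact h1.of_map

lemma arc_fst_mem' {e : V × V} {p : List V} (h : e ∈ listArcs p) : e.1 ∈ p.dropLast := by
  rw [← map_fst_listArcs]
  exact List.mem_map_of_mem h

lemma arc_snd_mem' {e : V × V} {p : List V} (h : e ∈ listArcs p) : e.2 ∈ p.tail := by
  rw [← map_snd_listArcs]
  exact List.mem_map_of_mem h

lemma nodup_no_both {p : List V} (h : p.Nodup) {c d : V}
    (h1 : (c, d) ∈ listArcs p) (h2 : (d, c) ∈ listArcs p) : False := by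
  induction p with
  | nil => simp [listArcs] at h1
  | cons a t ih =>
    cases t with
    | nil => simp [listArcs] at h1
    | cons b t' =>
      simp only [listArcs_cons₂, List.mem_cons] at h1 h2
      have hnab : a ∉ b :: t' := (List.nodup_cons.1 h).1
      rw [Prod.mk.injEq] at h1 h2
      rcases h1 with ⟨hca, hdb⟩ | h1' <;> rcases h2 with ⟨hda, hcb⟩ | h2'
      · apply hnab
        rw [← hcb, hca]
        simp
      · have : c ∈ t' := by simpa using arc_snd_mem' h2'
        exact hnab (by rw [← hca]; exact List.mem_cons_of_mem _ this)
      · have : d ∈ t' := by simpa using arc_snd_mem' h1'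
        exact hnab (by rw [← hda]; exact List.mem_cons_of_mem _ this)
      · exact ih (List.Nodup.of_cons h) h1' h2'

/-- count via filtered toFinset for nodup lists -/
lemma card_filter_toFinset {α β : Type*} [DecidableEq α] [DecidableEq β]
    {l : List α} (hl : l.Nodup) (f : α → β) (z : β) :
    (l.toFinset.filter (fun e => f e = z)).card = (l.map f).count z := by
  induction l with
  | nil => simp
  | cons a t ih =>
    rcases List.nodup_cons.1 hl with ⟨ha, ht⟩
    rw [List.toFinset_cons, Finset.filter_insert]
    by_cases hfa : f a = z
    · rw [if_pos hfa, Finset.card_insert_of_notMem (by simp [ha]), ih ht]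
      simp [List.count_cons, hfa]
    · rw [if_neg hfa, ih ht]
      simp [List.count_cons, hfa]

lemma od_listArcs {p : List V} (hnd : p.Nodup) (z : V) :
    od (listArcs p).toFinset z = p.dropLast.count z := by
  rw [od, card_filter_toFinset (nodup_listArcs hnd) Prod.fst z, map_fst_listArcs]

lemma idg_listArcs {p : List V} (hnd : p.Nodup) (z : V) :
    idg (listArcs p).toFinset z = p.tail.count z := by
  rw [idg, card_filter_toFinset (nodup_listArcs hnd) Prod.snd z, map_snd_listArcs]

/-- degrees of a nodup path with distinct endpoints -/
lemma path_degrees {p : List V} {x v : V} (hnd : p.Nodup) (hh : p.head? = some x)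
    (hl : p.getLast? = some v) (hxv : x ≠ v) :
    od (listArcs p).toFinset x = 1 ∧ idg (listArcs p).toFinset x = 0 ∧
      (∀ z, z ≠ x → z ≠ v → od (listArcs p).toFinset z = idg (listArcs p).toFinset z) := by
  obtain ⟨t, rfl⟩ : ∃ t, p = x :: t := by
    cases p with
    | nil => simp at hh
    | cons a t => simp at hh; exact ⟨t, by rw [hh]⟩
  have htne : t ≠ [] := by
    rintro rfl
    simp at hl
    exact hxv hl
  have hxt : x ∉ t := (List.nodup_cons.1 hnd).1
  have hdrop : (x :: t).dropLast = x :: t.dropLast := by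
    cases t with
    | nil => exact absurd rfl htne
    | cons b t' => rfl
  refine ⟨?_, ?_, ?_⟩
  · rw [od_listArcs hnd, hdrop]
    simp [List.count_cons]
    exact List.count_eq_zero_of_not_mem (fun hm => hxt ((List.dropLast_sublist t).mem hm))
  · rw [idg_listArcs hnd]
    simpa using List.count_eq_zero_of_not_mem hxt
  · intro z hzx hzv
    rw [od_listArcs hnd, idg_listArcs hnd]
    have h1 : (x :: t).dropLast.count z = (x :: t).count z := by
      conv_rhs => rw [← List.dropLast_append_getLast (l := x :: t) (by simp)]
      rw [List.count_append]
      have : (x :: t).getLast (by simp) = v := by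
        rwa [List.getLast?_eq_getLast (by simp), Option.some_inj] at hl
      simp [this, hzv, hzv.symm]
    have h2 : (x :: t).tail.count z = (x :: t).count z := by
      simp [List.count_cons, hzx, hzx.symm]
    rw [h1, h2]

/-- sum of out-degrees over a vertex set -/
lemma sum_od (F : Finset (V × V)) (S : Finset V) :
    ∑ z ∈ S, od F z = (F.filter (fun e => e.1 ∈ S)).card := by
  rw [Finset.card_eq_sum_card_fiberwise (f := fun e => e.1) (t := S)
    (by intro e he; exact (Finset.mem_filter.1 he).2)]
  refine Finset.sum_congr rfl fun z hz => ?_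
  have heq : (F.filter (fun e => e.1 ∈ S)).filter (fun e => e.1 = z)
      = F.filter (fun e => e.1 = z) := by
    rw [Finset.filter_filter]
    refine Finset.filter_congr fun e _ => ?_
    exact ⟨fun h' => h'.2, fun h' => ⟨h' ▸ hz, h'⟩⟩
  rw [od, heq]

lemma sum_idg (F : Finset (V × V)) (S : Finset V) :
    ∑ z ∈ S, idg F z = (F.filter (fun e => e.2 ∈ S)).card := by
  rw [Finset.card_eq_sum_card_fiberwise (f := fun e => e.2) (t := S)
    (by intro e he; exact (Finset.mem_filter.1 he).2)]
  refine Finset.sum_congr rfl fun z hz => ?_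
  have heq : (F.filter (fun e => e.2 ∈ S)).filter (fun e => e.2 = z)
      = F.filter (fun e => e.2 = z) := by
    rw [Finset.filter_filter]
    refine Finset.filter_congr fun e _ => ?_
    exact ⟨fun h' => h'.2, fun h' => ⟨h' ▸ hz, h'⟩⟩
  rw [idg, heq]

/-- flow extraction: positive excess at `x` forces reachability -/
lemma reach_of_excess [Fintype V] {F : Finset (V × V)} {x v : V} {k : ℕ} (hk : 0 < k)
    (hx : od F x = idg F x + k)
    (hbal : ∀ z, z ≠ x → z ≠ v → od F z = idg F z) : Reach F x v := by
  classical
  by_cases hxv : x = v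
  · subst hxv; exact Relation.ReflTransGen.refl
  by_contra hv
  set S : Finset V := Finset.univ.filter (fun z => Reach F x z) with hSdef
  have hxS : x ∈ S := by simp [hSdef]; exact Relation.ReflTransGen.refl
  have hvS : v ∉ S := by simp [hSdef]; exact hv
  have hclosed : ∀ e ∈ F, e.1 ∈ S → e.2 ∈ S := by
    intro e he h1
    simp only [hSdef, Finset.mem_filter, Finset.mem_univ, true_and] at h1 ⊢
    exact Relation.ReflTransGen.tail h1 (by simpa using he)
  have hle : (F.filter (fun e => e.1 ∈ S)).card ≤ (F.filter (fun e => e.2 ∈ S)).card := by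
    apply Finset.card_le_card
    intro e he
    rcases Finset.mem_filter.1 he with ⟨heF, h1⟩
    exact Finset.mem_filter.2 ⟨heF, hclosed e heF h1⟩
  have hsum : ∑ z ∈ S, od F z ≤ ∑ z ∈ S, idg F z := by
    rw [sum_od, sum_idg]; exact hle
  have hsplit_od : od F x + ∑ z ∈ S.erase x, od F z = ∑ z ∈ S, od F z :=
    Finset.add_sum_erase S (od F) hxS
  have hsplit_id : idg F x + ∑ z ∈ S.erase x, idg F z = ∑ z ∈ S, idg F z :=
    Finset.add_sum_erase S (idg F) hxS
  have hmid : ∑ z ∈ S.erase x, od F z = ∑ z ∈ S.erase x, idg F z := by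
    refine Finset.sum_congr rfl fun z hz => ?_
    rcases Finset.mem_erase.1 hz with ⟨hzx, hzS⟩
    exact hbal z hzx (fun h => hvS (h ▸ hzS))
  omega


/-! ### Menger for two arc-disjoint paths -/

lemma cardf_union {F G : Finset (V × V)} (h : Disjoint F G) (pr : V × V → Prop)
    [DecidablePred pr] :
    ((F ∪ G).filter pr).card = (F.filter pr).card + (G.filter pr).card := by
  rw [Finset.filter_union]
  exact Finset.card_union_of_disjoint
    (h.mono (Finset.filter_subset _ _) (Finset.filter_subset _ _))

lemma cardf_sdiff_add {F G : Finset (V × V)} (h : G ⊆ F) (pr : V × V → Prop)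
    [DecidablePred pr] :
    ((F \ G).filter pr).card + (G.filter pr).card = (F.filter pr).card := by
  have h1 : (F \ G).filter pr = F.filter pr \ G.filter pr := by
    ext e; simp only [Finset.mem_filter, Finset.mem_sdiff]; tauto
  rw [h1]
  exact Finset.card_sdiff_add_card_eq_card (Finset.filter_subset_filter pr h)

lemma cardf_inter_sdiff_add (F A : Finset (V × V)) (pr : V × V → Prop)
    [DecidablePred pr] :
    ((F ∩ A).filter pr).card + ((F \ A).filter pr).card = (F.filter pr).card := by
  have h1 : (F ∩ A) ∪ (F \ A) = F := by
    ext e; simp only [Finset.mem_union, Finset.mem_inter, Finset.mem_sdiff]; tauto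
  have h2 : Disjoint (F ∩ A) (F \ A) := by
    rw [Finset.disjoint_left]
    intro e he1 he2
    exact (Finset.mem_sdiff.1 he2).2 (Finset.mem_inter.1 he1).2
  rw [← h1, cardf_union h2]
  rw [h1]

lemma od_image_swap (R : Finset (V × V)) (z : V) :
    od (R.image Prod.swap) z = idg R z := by
  have h1 : (R.image Prod.swap).filter (fun e => e.1 = z)
      = (R.filter (fun e => e.2 = z)).image Prod.swap := by
    ext e
    simp only [Finset.mem_filter, Finset.mem_image]
    constructor
    · rintro ⟨⟨r, hr, rfl⟩, h1⟩
      exact ⟨r, ⟨hr, by simpa using h1⟩, rfl⟩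
    · rintro ⟨r, ⟨hr, h2⟩, rfl⟩
      exact ⟨⟨r, hr, rfl⟩, by simpa using h2⟩
  rw [od, h1, Finset.card_image_of_injective _ Prod.swap_injective, idg]

lemma idg_image_swap (R : Finset (V × V)) (z : V) :
    idg (R.image Prod.swap) z = od R z := by
  have h1 : (R.image Prod.swap).filter (fun e => e.2 = z)
      = (R.filter (fun e => e.1 = z)).image Prod.swap := by
    ext e
    simp only [Finset.mem_filter, Finset.mem_image]
    constructor
    · rintro ⟨⟨r, hr, rfl⟩, h1⟩
      exact ⟨r, ⟨hr, by simpa using h1⟩, rfl⟩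
    · rintro ⟨r, ⟨hr, h2⟩, rfl⟩
      exact ⟨⟨r, hr, rfl⟩, by simpa using h2⟩
  rw [idg, h1, Finset.card_image_of_injective _ Prod.swap_injective, od]

lemma od_le_idg_of_swap {R Q : Finset (V × V)} (h : ∀ r ∈ R, r.swap ∈ Q) (z : V) :
    od R z ≤ idg Q z := by
  apply Finset.card_le_card_of_injOn (fun e => e.swap)
  · intro e he
    rcases Finset.mem_filter.1 he with ⟨heR, h1⟩
    exact Finset.mem_filter.2 ⟨h e heR, by simpa using h1⟩
  · intro e _ f _ hef
    exact Prod.swap_injective hef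

lemma idg_le_od_of_swap {R Q : Finset (V × V)} (h : ∀ r ∈ R, r.swap ∈ Q) (z : V) :
    idg R z ≤ od Q z := by
  apply Finset.card_le_card_of_injOn (fun e => e.swap)
  · intro e he
    rcases Finset.mem_filter.1 he with ⟨heR, h1⟩
    exact Finset.mem_filter.2 ⟨h e heR, by simpa using h1⟩
  · intro e _ f _ hef
    exact Prod.swap_injective hef

lemma isDipath_of_parts {A : Finset (V × V)} {p : List V} {x v : V} (hne : p ≠ [])
    (hh : p.head? = some x) (hl : p.getLast? = some v) (hnd : p.Nodup)
    (harcs : ∀ e ∈ listArcs p, e ∈ A) : IsDipath A x v p :=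
  ⟨hne, hh, hl, hnd, chain'_iff_arcs.2 (fun e he => by simpa using harcs e he)⟩

/-- Hard direction of Menger for 2 arc-disjoint paths. -/
theorem two_reaches_of_robust [Fintype V] {A : Finset (V × V)}
    (hor : ∀ a b : V, ¬((a, b) ∈ A ∧ (b, a) ∈ A)) {x v : V}
    (hreach : Reach A x v) (hrob : ∀ e ∈ A, Reach (A.erase e) x v) :
    TwoReaches A x v := by
  classical
  by_cases hxv : x = v
  · subst hxv
    refine ⟨[x], [x], ?_, ?_, ?_⟩ <;>
      simp [IsDipath, ArcDisjoint, listArcs, List.Chain']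
  obtain ⟨p, hpne, hph, hpl, hpnd, hparcs⟩ := dipath_of_reach hreach
  have hres := residual_reach hph hpl hparcs hrob
  obtain ⟨q, hqne, hqh, hql, hqnd, hqarcs⟩ := dipath_of_reach hres
  set P : Finset (V × V) := (listArcs p).toFinset with hPdef
  set Q : Finset (V × V) := (listArcs q).toFinset with hQdef
  set R : Finset (V × V) := P.filter (fun e => e.swap ∈ Q) with hRdef
  set F : Finset (V × V) := (P \ R) ∪ (Q ∩ A) with hFdef
  have hPA : P ⊆ A := fun e he => hparcs e (List.mem_toFinset.1 he)
  have hQchar : ∀ e ∈ Q, (e ∈ A ∧ e ∉ P) ∨ e.swap ∈ P := by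
    intro e he
    have := hqarcs e (List.mem_toFinset.1 he)
    rcases mem_reverseAlong.1 this with ⟨h1, h2⟩ | h
    · exact Or.inl ⟨h1, fun hm => h2 (List.mem_toFinset.1 hm)⟩
    · exact Or.inr (List.mem_toFinset.2 h)
  have hPno2 : ∀ e : V × V, e ∈ P → e.swap ∈ P → False := by
    rintro ⟨c, d⟩ h1 h2
    exact nodup_no_both hpnd (List.mem_toFinset.1 h1) (List.mem_toFinset.1 h2)
  have hRP : R ⊆ P := Finset.filter_subset _ _
  have hQdiff : Q \ A = R.image Prod.swap := by
    ext e
    simp only [Finset.mem_sdiff, Finset.mem_image]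
    constructor
    · rintro ⟨heQ, heA⟩
      rcases hQchar e heQ with ⟨h1, _⟩ | h
      · exact absurd h1 heA
      · exact ⟨e.swap, Finset.mem_filter.2 ⟨h, by simpa using heQ⟩, by simp⟩
    · rintro ⟨r, hr, rfl⟩
      rcases Finset.mem_filter.1 hr with ⟨hrP, hrQ⟩
      refine ⟨hrQ, ?_⟩
      intro hsA
      obtain ⟨c, d⟩ := r
      exact hor c d ⟨hPA hrP, hsA⟩
  have hRQ : ∀ r ∈ R, r.swap ∈ Q := fun r hr => (Finset.mem_filter.1 hr).2
  have hdisj : Disjoint (P \ R) (Q ∩ A) := by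
    rw [Finset.disjoint_left]
    intro e he1 he2
    rcases Finset.mem_sdiff.1 he1 with ⟨heP, _⟩
    rcases Finset.mem_inter.1 he2 with ⟨heQ, heA⟩
    rcases hQchar e heQ with ⟨_, h2⟩ | h
    · exact h2 heP
    · exact hPno2 e heP h
  have hFA : F ⊆ A := by
    intro e he
    rcases Finset.mem_union.1 he with he | he
    · exact hPA (Finset.mem_sdiff.1 he).1
    · exact (Finset.mem_inter.1 he).2
  -- degree facts
  obtain ⟨hodPx0, hidPx0, hbalP0⟩ := path_degrees hpnd hph hpl hxv
  obtain ⟨hodQx0, hidQx0, hbalQ0⟩ := path_degrees hqnd hqh hql hxv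
  have hodPx : od P x = 1 := hodPx0
  have hidPx : idg P x = 0 := hidPx0
  have hbalP : ∀ z, z ≠ x → z ≠ v → od P z = idg P z := hbalP0
  have hodQx : od Q x = 1 := hodQx0
  have hidQx : idg Q x = 0 := hidQx0
  have hbalQ : ∀ z, z ≠ x → z ≠ v → od Q z = idg Q z := hbalQ0
  have hdeg : ∀ z : V,
      od F z + od R z + idg R z = od P z + od Q z ∧
      idg F z + idg R z + od R z = idg P z + idg Q z ∧
      od R z ≤ idg Q z ∧ idg R z ≤ od Q z ∧
      od R z ≤ od P z ∧ idg R z ≤ idg P z := by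
    intro z
    have hE1 : od F z = od (P \ R) z + od (Q ∩ A) z := cardf_union hdisj _
    have hE1' : idg F z = idg (P \ R) z + idg (Q ∩ A) z := cardf_union hdisj _
    have hE2 : od (P \ R) z + od R z = od P z := cardf_sdiff_add hRP _
    have hE2' : idg (P \ R) z + idg R z = idg P z := cardf_sdiff_add hRP _
    have hE3 : od (Q ∩ A) z + od (Q \ A) z = od Q z := cardf_inter_sdiff_add Q A _
    have hE3' : idg (Q ∩ A) z + idg (Q \ A) z = idg Q z := cardf_inter_sdiff_add Q A _
    have hE4 : od (Q \ A) z = idg R z := by rw [hQdiff, od_image_swap]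
    have hE4' : idg (Q \ A) z = od R z := by rw [hQdiff, idg_image_swap]
    have hI5 : od R z ≤ idg Q z := od_le_idg_of_swap hRQ z
    have hI6 : idg R z ≤ od Q z := idg_le_od_of_swap hRQ z
    have hI7 : od R z ≤ od P z := Finset.card_le_card (Finset.filter_subset_filter _ hRP)
    have hI8 : idg R z ≤ idg P z := Finset.card_le_card (Finset.filter_subset_filter _ hRP)
    omega
  have hFx : od F x = idg F x + 2 := by
    obtain ⟨e1, e2, i5, i6, i7, i8⟩ := hdeg x
    omega
  have hFbal : ∀ z, z ≠ x → z ≠ v → od F z = idg F z := by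
    intro z hzx hzv
    obtain ⟨e1, e2, _, _, _, _⟩ := hdeg z
    have b1 := hbalP z hzx hzv
    have b2 := hbalQ z hzx hzv
    omega
  -- extract first path
  have hreach1 : Reach F x v := reach_of_excess (k := 2) (by norm_num) hFx hFbal
  obtain ⟨p₁, h1ne, h1h, h1l, h1nd, h1arcs⟩ := dipath_of_reach hreach1
  set P₁ : Finset (V × V) := (listArcs p₁).toFinset with hP₁def
  have hP₁F : P₁ ⊆ F := fun e he => h1arcs e (List.mem_toFinset.1 he)
  obtain ⟨hodP₁x0, hidP₁x0, hbalP₁0⟩ := path_degrees h1nd h1h h1l hxv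
  have hodP₁x : od P₁ x = 1 := hodP₁x0
  have hidP₁x : idg P₁ x = 0 := hidP₁x0
  have hbalP₁ : ∀ z, z ≠ x → z ≠ v → od P₁ z = idg P₁ z := hbalP₁0
  set F' : Finset (V × V) := F \ P₁ with hF'def
  have hdeg' : ∀ z : V, od F' z + od P₁ z = od F z ∧ idg F' z + idg P₁ z = idg F z :=
    fun z => ⟨cardf_sdiff_add hP₁F _, cardf_sdiff_add hP₁F _⟩
  have hF'x : od F' x = idg F' x + 1 := by
    obtain ⟨e1, e2⟩ := hdeg' x
    omega
  have hF'bal : ∀ z, z ≠ x → z ≠ v → od F' z = idg F' z := by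
    intro z hzx hzv
    obtain ⟨e1, e2⟩ := hdeg' z
    have b1 := hbalP₁ z hzx hzv
    have b2 := hFbal z hzx hzv
    omega
  have hreach2 : Reach F' x v := reach_of_excess (k := 1) (by norm_num) hF'x hF'bal
  obtain ⟨p₂, h2ne, h2h, h2l, h2nd, h2arcs⟩ := dipath_of_reach hreach2
  refine ⟨p₁, p₂, ?_, ?_, ?_⟩
  · exact isDipath_of_parts h1ne h1h h1l h1nd (fun e he => hFA (h1arcs e he))
  · refine isDipath_of_parts h2ne h2h h2l h2nd (fun e he => hFA ?_)
    exact (Finset.mem_sdiff.1 (h2arcs e he)).1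
  · intro e he1 he2
    have : e ∈ P₁ := List.mem_toFinset.2 he1
    exact (Finset.mem_sdiff.1 (h2arcs e he2)).2 this

/-! ### Graph-theoretic assembly -/

lemma two_reaches_self (A : Finset (V × V)) (v : V) : TwoReaches A v v := by
  refine ⟨[v], [v], ?_, ?_, ?_⟩ <;> simp [IsDipath, ArcDisjoint, listArcs, List.Chain']

lemma reach_of_reaches {A : Finset (V × V)} {u v : V} (h : Reaches A u v) :
    Reach A u v := by
  obtain ⟨p, hne, hh, hl, hnd, hch⟩ := h
  exact reach_of_path hh hl (fun e he => by simpa using chain'_iff_arcs.1 hch e he)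

lemma reach_erase_of_twoReaches {A : Finset (V × V)} {u v : V}
    (h : TwoReaches A u v) (e : V × V) : Reach (A.erase e) u v := by
  obtain ⟨p, q, hp, hq, hd⟩ := h
  by_cases hep : e ∈ listArcs p
  · obtain ⟨hne, hh, hl, hnd, hch⟩ := hq
    refine reach_of_path hh hl (fun f hf => Finset.mem_erase.2 ⟨?_, ?_⟩)
    · rintro rfl; exact hd f hep hf
    · simpa using chain'_iff_arcs.1 hch f hf
  · obtain ⟨hne, hh, hl, hnd, hch⟩ := hp
    refine reach_of_path hh hl (fun f hf => Finset.mem_erase.2 ⟨?_, ?_⟩)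
    · rintro rfl; exact hep hf
    · simpa using chain'_iff_arcs.1 hch f hf

lemma erase_erase_subset {α : Type*} [DecidableEq α] (s : Finset α) (a b : α) :
    (s.erase a).erase b ⊆ s.erase b := by
  intro f hf
  rcases Finset.mem_erase.1 hf with ⟨h1, h2⟩
  exact Finset.mem_erase.2 ⟨h1, (Finset.mem_erase.1 h2).2⟩

/-- connectivity in `G` outside of `U` -/
def ConnW (G : SimpleGraph V) (U : Finset V) : V → V → Prop :=
  Relation.ReflTransGen (fun s t => s ∉ U ∧ t ∉ U ∧ G.Adj s t)

lemma connW_symm {G : SimpleGraph V} {U : Finset V} {a b : V} (h : ConnW G U a b) :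
    ConnW G U b a := by
  induction h with
  | refl => exact Relation.ReflTransGen.refl
  | tail _ hst ih =>
    exact Relation.ReflTransGen.trans
      (Relation.ReflTransGen.single ⟨hst.2.1, hst.1, hst.2.2.symm⟩) ih

section Main
variable [Fintype V] {G : SimpleGraph V} {A₁ : Finset (V × V)}
  (hor₁ : IsOrientation G A₁) (hsc₁ : StronglyConnected A₁)
  {v : V} {U : Finset V} (hU : ∀ u : V, u ∈ U ↔ TwoReaches A₁ u v)

include hor₁ hsc₁ hU

/-- a vertex outside U has a cut arc -/
lemma exists_cut_arc {z : V} (hz : z ∉ U) :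
    ∃ e' ∈ A₁, ¬ Reach (A₁.erase e') z v := by
  by_contra hrob
  push_neg at hrob
  exact hz ((hU z).2 (two_reaches_of_robust hor₁.2
    (reach_of_reaches (hsc₁ z v)) hrob))

/-- no arc from outside the trap of an entering arc back into the trap -/
lemma noentry {a : V × V} (haA : a ∈ A₁) (ha2 : a.2 ∈ U) {z z' : V}
    (hz : ¬ Reach (A₁.erase a) z v) (hz' : Reach (A₁.erase a) z' v)
    (hz'U : z' ∉ U) (hd : (z', z) ∈ A₁) : False := by
  have hLem1 : ∀ u ∈ U, ∀ e, Reach (A₁.erase e) u v :=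
    fun u hu e => reach_erase_of_twoReaches ((hU u).1 hu) e
  obtain ⟨e', he'A, hT'⟩ := exists_cut_arc hor₁ hsc₁ hU hz'U
  have he'a : e' ≠ a := by rintro rfl; exact hT' hz'
  have he'd : e' ≠ (z', z) := by
    rintro rfl
    rcases reach_erase_or (d := (z', z)) hz' with h | h
    · exact hT' (reach_mono (erase_erase_subset _ _ _) h)
    · exact hz h
  have hzT' : ¬ Reach (A₁.erase e') z v := by
    intro h
    exact hT' (Relation.ReflTransGen.head
      (Finset.mem_erase.2 ⟨fun heq => he'd heq.symm, hd⟩) h)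
  -- find the exit arc of the double trap
  have hzX : (¬ Reach (A₁.erase a) z v) ∧ ¬ Reach (A₁.erase e') z v := ⟨hz, hzT'⟩
  have hvX : ¬ ((¬ Reach (A₁.erase a) v v) ∧ ¬ Reach (A₁.erase e') v v) :=
    fun h => h.1 Relation.ReflTransGen.refl
  obtain ⟨s, t, hXs, hXt, hst⟩ := exists_exit
    (P := fun w => (¬ Reach (A₁.erase a) w v) ∧ ¬ Reach (A₁.erase e') w v)
    (reach_of_reaches (hsc₁ z v)) hzX hvX
  by_cases ht1 : Reach (A₁.erase a) t v
  · by_cases hsta : (s, t) = a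
    · have hs1 : s = a.1 := by rw [← hsta]
      have : Reach (A₁.erase e') a.1 v :=
        Relation.ReflTransGen.head
          (Finset.mem_erase.2 ⟨fun h => he'a h.symm, haA⟩) (hLem1 a.2 ha2 e')
      exact hXs.2 (hs1 ▸ this)
    · exact hXs.1 (Relation.ReflTransGen.head (Finset.mem_erase.2 ⟨hsta, hst⟩) ht1)
  · have ht2 : Reach (A₁.erase e') t v := by
      by_contra h2
      exact hXt ⟨ht1, h2⟩
    by_cases hste : (s, t) = e'
    · -- t = e'.2 and t is still in the trap of a
      have ht' : ¬ Reach (A₁.erase a) e'.2 v := by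
        have : e'.2 = t := by rw [← hste]
        rwa [this]
      rcases reach_erase_or (d := e') hz' with h | h
      · exact hT' (reach_mono (erase_erase_subset _ _ _) h)
      · exact ht' h
    · exact hXs.2 (Relation.ReflTransGen.head (Finset.mem_erase.2 ⟨hste, hst⟩) ht2)

/-- entering arcs of `A₁` with tails connected outside `U` are equal -/
lemma uniq_entering {a b : V × V} (ha : a ∈ A₁) (ha1 : a.1 ∉ U) (ha2 : a.2 ∈ U)
    (hb : b ∈ A₁) (hb1 : b.1 ∉ U) (hb2 : b.2 ∈ U)
    (hconn : ConnW G U a.1 b.1) : a = b := by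
  have hLem1 : ∀ u ∈ U, ∀ e, Reach (A₁.erase e) u v :=
    fun u hu e => reach_erase_of_twoReaches ((hU u).1 hu) e
  by_contra hab
  have hTa1 : ¬ Reach (A₁.erase a) a.1 v := by
    intro hr
    have hrob : ∀ e ∈ A₁, Reach (A₁.erase e) a.1 v := by
      intro e heA
      by_cases hea : e = a
      · exact hea ▸ hr
      · exact Relation.ReflTransGen.head
          (Finset.mem_erase.2 ⟨fun h => hea h.symm, ha⟩) (hLem1 a.2 ha2 e)
    exact ha1 ((hU a.1).2 (two_reaches_of_robust hor₁.2
      (reach_of_reaches (hsc₁ a.1 v)) hrob))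
  have hTb1 : Reach (A₁.erase a) b.1 v :=
    Relation.ReflTransGen.head
      (Finset.mem_erase.2 ⟨fun h => hab h.symm, hb⟩) (hLem1 b.2 hb2 a)
  obtain ⟨s, t, hPs, hPt, hr₀⟩ := exists_exit
    (P := fun w => ¬ Reach (A₁.erase a) w v) hconn hTa1 (fun h => h hTb1)
  have ht : Reach (A₁.erase a) t v := not_not.1 hPt
  obtain ⟨hsU, htU, hadj⟩ := hr₀
  rcases (hor₁.1 s t).1 hadj with h | h
  · by_cases hsta : (s, t) = a
    · have : t = a.2 := by rw [← hsta]
      exact htU (this ▸ ha2)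
    · exact hPs (Relation.ReflTransGen.head (Finset.mem_erase.2 ⟨hsta, h⟩) ht)
  · exact noentry hor₁ hsc₁ hU ha ha2 hPs ht htU h

end Main

section Cross
variable {G : SimpleGraph V} {A₂ : Finset (V × V)} (hor₂ : IsOrientation G A₂)

include hor₂ in
/-- a path in A₂ from outside U to v ∈ U has a first crossing arc, whose tail is
connected to the start outside U -/
lemma exists_crossing {U : Finset V} {v x : V} (hvU : v ∈ U) (hx : x ∉ U)
    (h : Reach A₂ x v) : ∃ g ∈ A₂, g.1 ∉ U ∧ g.2 ∈ U ∧ ConnW G U x g.1 := by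
  induction h using Relation.ReflTransGen.head_induction_on with
  | refl => exact absurd hvU hx
  | head hst hrest ih =>
    rename_i s t
    by_cases htU : t ∈ U
    · exact ⟨(s, t), hst, hx, htU, Relation.ReflTransGen.refl⟩
    · obtain ⟨g, hg, hg1, hg2, hconn⟩ := ih htU
      have hadj : G.Adj s t := (hor₂.1 s t).2 (Or.inl hst)
      exact ⟨g, hg, hg1, hg2, Relation.ReflTransGen.head ⟨hx, htU, hadj⟩ hconn⟩

end Cross

lemma card_split (A : Finset (V × V)) (U : Finset V) :
    (A.filter (fun e => e.2 ∈ U)).card =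
      (A.filter (fun e => e.1 ∈ U ∧ e.2 ∈ U)).card +
      (A.filter (fun e => e.1 ∉ U ∧ e.2 ∈ U)).card := by
  classical
  rw [← Finset.card_filter_add_card_filter_not
    (p := fun e => e.1 ∈ U) (s := A.filter (fun e => e.2 ∈ U))]
  congr 1
  · rw [Finset.filter_filter]
    congr 1
    apply Finset.filter_congr
    intro e _
    exact and_comm
  · rw [Finset.filter_filter]
    congr 1
    apply Finset.filter_congr
    intro e _
    exact and_comm

lemma card_inside_eq {G : SimpleGraph V} {A₁ A₂ : Finset (V × V)}
    (hor₁ : IsOrientation G A₁) (hor₂ : IsOrientation G A₂) (U : Finset V) :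
    (A₁.filter (fun e => e.1 ∈ U ∧ e.2 ∈ U)).card =
      (A₂.filter (fun e => e.1 ∈ U ∧ e.2 ∈ U)).card := by
  classical
  apply Finset.card_bij (i := fun e _ => if e ∈ A₂ then e else e.swap)
  · intro e he
    rcases Finset.mem_filter.1 he with ⟨heA₁, hU1, hU2⟩
    by_cases h2 : e ∈ A₂
    · rw [if_pos h2]
      exact Finset.mem_filter.2 ⟨h2, hU1, hU2⟩
    · rw [if_neg h2]
      have hadj : G.Adj e.1 e.2 := (hor₁.1 e.1 e.2).2 (Or.inl (by simpa using heA₁))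
      rcases (hor₂.1 e.1 e.2).1 hadj with h | h
      · exact absurd (by simpa using h) h2
      · exact Finset.mem_filter.2 ⟨h, hU2, hU1⟩
  · intro e1 he1 e2 he2 heq
    rcases Finset.mem_filter.1 he1 with ⟨he1A, _⟩
    rcases Finset.mem_filter.1 he2 with ⟨he2A, _⟩
    by_cases h1 : e1 ∈ A₂ <;> by_cases h2 : e2 ∈ A₂
    · rwa [if_pos h1, if_pos h2] at heq
    · rw [if_pos h1, if_neg h2] at heq
      exfalso
      apply hor₁.2 e2.1 e2.2
      constructor
      · simpa using he2A
      · have : e2.swap ∈ A₁ := heq ▸ he1A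
        exact this
    · rw [if_neg h1, if_pos h2] at heq
      exfalso
      apply hor₁.2 e1.1 e1.2
      constructor
      · simpa using he1A
      · have : e1.swap ∈ A₁ := heq.symm ▸ he2A
        exact this
    · rw [if_neg h1, if_neg h2] at heq
      exact Prod.swap_injective heq
  · intro b hb
    rcases Finset.mem_filter.1 hb with ⟨hbA₂, hbU1, hbU2⟩
    have hadj : G.Adj b.1 b.2 := (hor₂.1 b.1 b.2).2 (Or.inl (by simpa using hbA₂))
    rcases (hor₁.1 b.1 b.2).1 hadj with h | h
    · refine ⟨b, Finset.mem_filter.2 ⟨by simpa using h, hbU1, hbU2⟩, ?_⟩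
      rw [if_pos hbA₂]
    · refine ⟨b.swap, Finset.mem_filter.2 ⟨h, hbU2, hbU1⟩, ?_⟩
      have hns : b.swap ∉ A₂ := by
        intro hsw
        exact hor₂.2 b.1 b.2 ⟨by simpa using hbA₂, hsw⟩
      rw [if_neg hns, Prod.swap_swap]

lemma card_entering_le [Fintype V] {G : SimpleGraph V} {A₁ A₂ : Finset (V × V)}
    (hor₁ : IsOrientation G A₁) (hsc₁ : StronglyConnected A₁)
    (hor₂ : IsOrientation G A₂) (hsc₂ : StronglyConnected A₂)
    {v : V} {U : Finset V} (hU : ∀ u : V, u ∈ U ↔ TwoReaches A₁ u v) :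
    (A₁.filter (fun e => e.1 ∉ U ∧ e.2 ∈ U)).card ≤
      (A₂.filter (fun e => e.1 ∉ U ∧ e.2 ∈ U)).card := by
  classical
  have hvU : v ∈ U := (hU v).2 (two_reaches_self A₁ v)
  set f : V × V → V × V := fun e =>
    if h : ∃ g, g ∈ A₂ ∧ g.1 ∉ U ∧ g.2 ∈ U ∧ ConnW G U e.1 g.1 then h.choose else e
    with hfdef
  have hspec : ∀ e ∈ A₁.filter (fun e => e.1 ∉ U ∧ e.2 ∈ U),
      f e ∈ A₂ ∧ (f e).1 ∉ U ∧ (f e).2 ∈ U ∧ ConnW G U e.1 (f e).1 := by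
    intro e he
    rcases Finset.mem_filter.1 he with ⟨heA, h1, h2⟩
    have hx : Reach A₂ e.1 v := reach_of_reaches (hsc₂ e.1 v)
    obtain ⟨g, hg, hg1, hg2, hconn⟩ := exists_crossing hor₂ hvU h1 hx
    have hex : ∃ g, g ∈ A₂ ∧ g.1 ∉ U ∧ g.2 ∈ U ∧ ConnW G U e.1 g.1 :=
      ⟨g, hg, hg1, hg2, hconn⟩
    rw [hfdef]
    simp only [hex, dif_pos]
    exact hex.choose_spec
  apply Finset.card_le_card_of_injOn f
  · intro e he
    obtain ⟨h1, h2, h3, _⟩ := hspec e he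
    exact Finset.mem_filter.2 ⟨h1, h2, h3⟩
  · intro e1 he1 e2 he2 heq
    obtain ⟨_, _, hfe2U, hconn1⟩ := hspec e1 he1
    obtain ⟨_, _, _, hconn2⟩ := hspec e2 he2
    rcases Finset.mem_filter.1 he1 with ⟨he1A, h11, h12⟩
    rcases Finset.mem_filter.1 he2 with ⟨he2A, h21, h22⟩
    have hconn : ConnW G U e1.1 e2.1 :=
      Relation.ReflTransGen.trans (heq ▸ hconn1) (connW_symm hconn2)
    exact uniq_entering hor₁ hsc₁ hU he1A h11 h12 he2A h21 h22 hconn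

end StmtAux

/-- For two strongly connected orientations `A₁`, `A₂` of a simple graph `G`, if `U` is
the set of vertices two-reaching `v` in `A₁`, then the sum over `U` of indegrees in `A₂`
is at least the sum over `U` of indegrees in `A₁`. -/
theorem stmt_13 {V : Type*} [Fintype V] [DecidableEq V] (G : SimpleGraph V)
    (A₁ A₂ : Finset (V × V))
    (hor₁ : IsOrientation G A₁) (hsc₁ : StronglyConnected A₁)
    (hor₂ : IsOrientation G A₂) (hsc₂ : StronglyConnected A₂)
    (v : V) (U : Finset V) (hU : ∀ u : V, u ∈ U ↔ TwoReaches A₁ u v) :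
    ∑ u ∈ U, inDeg A₁ u ≤ ∑ u ∈ U, inDeg A₂ u := by
  classical
  have hs1 : ∑ u ∈ U, inDeg A₁ u = (A₁.filter (fun e => e.2 ∈ U)).card :=
    StmtAux.sum_idg A₁ U
  have hs2 : ∑ u ∈ U, inDeg A₂ u = (A₂.filter (fun e => e.2 ∈ U)).card :=
    StmtAux.sum_idg A₂ U
  rw [hs1, hs2, StmtAux.card_split A₁ U, StmtAux.card_split A₂ U,
    StmtAux.card_inside_eq hor₁ hor₂ U]
  have := StmtAux.card_entering_le hor₁ hsc₁ hor₂ hsc₂ hU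
  omega
end
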